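/- arXiv:2404.13527 — 3 statements merged into one kernel-verified Lean document; each statement's English description precedes it below -/
import Mathlib

section
/- Let G be a finite simple graph that is the union of two odd cycles whose intersection is exactly one edge (they share exactly two vertices, which are adjacent, and the edge between them, and no other vertices or edges). Then G is not strongly EFX-orientable. -/
open SimpleGraph
open scoped Classical

variable {V : Type*}

def bundleSet (G : SimpleGraph V) (head : Sym2 V → V) (v : V) : Set (Sym2 V) :=
  {e ∈ G.edgeSet | head e = v}

def IsEFXOrientation (G : SimpleGraph V) (f : V → Set (Sym2 V) → NNReal)
    (head : Sym2 V → V) : Prop :=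
  (∀ e ∈ G.edgeSet, head e ∈ e) ∧
  ∀ a b : V, ∀ g ∈ bundleSet G head b,
    f a (bundleSet G head b \ {g}) ≤ f a (bundleSet G head a)

def StronglyEFXOrientable [Fintype V] (G : SimpleGraph V) : Prop :=
  ∀ f : V → Set (Sym2 V) → NNReal,
    (∀ a, Monotone (f a)) →
    (∀ a X, f a X = f a (X ∩ G.incidenceSet a)) →
    ∃ head : Sym2 V → V, IsEFXOrientation G f head

noncomputable def bundle [Fintype V] (G : SimpleGraph V) (head : Sym2 V → V) (v : V) :
    Finset (Sym2 V) :=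
  Finset.univ.filter fun e => e ∈ G.edgeSet ∧ head e = v

def IsEFX01Orientation [Fintype V] (G : SimpleGraph V) (w : V → Sym2 V → ℕ)
    (head : Sym2 V → V) : Prop :=
  (∀ e ∈ G.edgeSet, head e ∈ e) ∧
  ∀ a b : V, ∀ g ∈ bundle G head b,
    ∑ e ∈ (bundle G head b).erase g, w a e ≤ ∑ e ∈ bundle G head a, w a e

def ZeroOneStronglyEFXOrientable [Fintype V] (G : SimpleGraph V) : Prop :=
  ∀ w : V → Sym2 V → ℕ, (∀ a e, w a e ≤ 1) → (∀ a e, a ∉ e → w a e = 0) →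
    ∃ head : Sym2 V → V, IsEFX01Orientation G w head

def IndepOn (G : SimpleGraph V) (s : Set V) : Prop :=
  ∀ a ∈ s, ∀ b ∈ s, ¬ G.Adj a b

/-- The edge set of the cycle traced by an injective map `c : ZMod n → V`
(for `n ≥ 3` this is an `n`-cycle on the image of `c`). -/
def cycleEdges {n : ℕ} (c : ZMod n → V) : Set (Sym2 V) :=
  Set.range fun i : ZMod n => s(c i, c (i + 1))

/- ============================================================
   Auxiliary machinery for the proof.
   ============================================================ -/

lemma mem_bundle [Fintype V] {G : SimpleGraph V} {head : Sym2 V → V} {x : V} {e : Sym2 V} :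
    e ∈ bundle G head x ↔ e ∈ G.edgeSet ∧ head e = x := by
  simp [bundle]

noncomputable def valOf [Fintype V] (G : SimpleGraph V) (w : V → Sym2 V → ℕ)
    (head : Sym2 V → V) (x : V) : ℕ :=
  ∑ e ∈ bundle G head x, w x e

noncomputable def cwA (a b : V) (x : V) (e : Sym2 V) : ℕ :=
  if (x = a ∨ x = b) ∧ e = s(a, b) then 1 else 0

noncomputable def cwB (u : ℕ → V) (m : ℕ) (x : V) (e : Sym2 V) : ℕ :=
  ∑ j ∈ (Finset.range (m-1)).filter (fun j => Odd j),
      ((if x = u j ∧ e = s(u j, u (j+1)) then 1 else 0) +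
       (if x = u (j+1) ∧ e = s(u j, u (j+1)) then 2 else 0))

noncomputable def cwC (v : ℕ → V) (n : ℕ) (x : V) (e : Sym2 V) : ℕ :=
  ∑ j ∈ (Finset.range (n-1)).filter (fun j => Even j),
      ((if x = v j ∧ e = s(v j, v (j+1)) then 2 else 0) +
       (if x = v (j+1) ∧ e = s(v j, v (j+1)) then 1 else 0))

/-- The concrete counterexample weights. -/
noncomputable def cw (a b : V) (u v : ℕ → V) (m n : ℕ) (x : V) (e : Sym2 V) : ℕ :=
  cwA a b x e + cwB u m x e + cwC v n x e

lemma natz_inj {m : ℕ} (hm : 2 ≤ m) {i j : ℕ} (hi : i ≤ m-1) (hj : j ≤ m-1)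
    (h : (i : ZMod m) = j) : i = j := by
  haveI : NeZero m := ⟨by omega⟩
  have := congrArg ZMod.val h
  rwa [ZMod.val_natCast_of_lt (by omega), ZMod.val_natCast_of_lt (by omega)] at this

lemma natz_neg {m k : ℕ} (hk : k ≤ m) : ((m-k : ℕ) : ZMod m) = -(k : ZMod m) := by
  have h : ((m-k : ℕ) : ZMod m) + (k : ZMod m) = 0 := by
    rw [← Nat.cast_add, show m-k+k = m by omega, ZMod.natCast_self]
  exact eq_neg_of_add_eq_zero_left h

lemma zedge_inj {m : ℕ} (hm3 : 3 ≤ m) (d : ZMod m → V) (hd : Function.Injective d)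
    {i j : ZMod m} (h : s(d i, d (i+1)) = s(d j, d (j+1))) : i = j := by
  rcases Sym2.eq_iff.1 h with ⟨h1, _⟩ | ⟨h1, h2⟩
  · exact hd h1
  · exfalso
    have e1 : i = j + 1 := hd h1
    have e2 : i + 1 = j := hd h2
    have h20 : (2 : ZMod m) = 0 := by
      have hjj : j = j + 2 := by
        conv_lhs => rw [← e2, e1]
        ring
      exact (left_eq_add.1 hjj)
    haveI : NeZero m := ⟨by omega⟩
    have hv := congrArg ZMod.val h20
    rw [show (2 : ZMod m) = ((2:ℕ) : ZMod m) by push_cast; ring,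
      ZMod.val_natCast_of_lt (by omega), ZMod.val_zero] at hv
    omega

lemma cwB_zero {u : ℕ → V} {m : ℕ} {x : V} {e : Sym2 V}
    (h : ∀ j, j < m-1 → Odd j → e ≠ s(u j, u (j+1))) : cwB u m x e = 0 := by
  apply Finset.sum_eq_zero
  intro k hk
  simp only [Finset.mem_filter, Finset.mem_range] at hk
  rw [if_neg (fun hh => h k hk.1 hk.2 hh.2), if_neg (fun hh => h k hk.1 hk.2 hh.2)]
  rfl

lemma cwC_zero {v : ℕ → V} {n : ℕ} {x : V} {e : Sym2 V}
    (h : ∀ j, j < n-1 → Even j → e ≠ s(v j, v (j+1))) : cwC v n x e = 0 := by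
  apply Finset.sum_eq_zero
  intro k hk
  simp only [Finset.mem_filter, Finset.mem_range] at hk
  rw [if_neg (fun hh => h k hk.1 hk.2 hh.2), if_neg (fun hh => h k hk.1 hk.2 hh.2)]
  rfl

lemma cwB_single {u : ℕ → V} {m : ℕ} {x : V} {e : Sym2 V} (j : ℕ)
    (hj : j < m-1) (hodd : Odd j)
    (h : ∀ k, k < m-1 → Odd k → k ≠ j → e ≠ s(u k, u (k+1))) :
    cwB u m x e = (if x = u j ∧ e = s(u j, u (j+1)) then 1 else 0) +
       (if x = u (j+1) ∧ e = s(u j, u (j+1)) then 2 else 0) := by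
  apply Finset.sum_eq_single_of_mem
  · simp only [Finset.mem_filter, Finset.mem_range]; exact ⟨hj, hodd⟩
  · intro k hk hkj
    simp only [Finset.mem_filter, Finset.mem_range] at hk
    rw [if_neg (fun hh => h k hk.1 hk.2 hkj hh.2), if_neg (fun hh => h k hk.1 hk.2 hkj hh.2)]
    rfl

lemma cwC_single {v : ℕ → V} {n : ℕ} {x : V} {e : Sym2 V} (j : ℕ)
    (hj : j < n-1) (heven : Even j)
    (h : ∀ k, k < n-1 → Even k → k ≠ j → e ≠ s(v k, v (k+1))) :
    cwC v n x e = (if x = v j ∧ e = s(v j, v (j+1)) then 2 else 0) +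
       (if x = v (j+1) ∧ e = s(v j, v (j+1)) then 1 else 0) := by
  apply Finset.sum_eq_single_of_mem
  · simp only [Finset.mem_filter, Finset.mem_range]; exact ⟨hj, heven⟩
  · intro k hk hkj
    simp only [Finset.mem_filter, Finset.mem_range] at hk
    rw [if_neg (fun hh => h k hk.1 hk.2 hkj hh.2), if_neg (fun hh => h k hk.1 hk.2 hkj hh.2)]
    rfl

section CW

variable (a b : V) (u v : ℕ → V) (m n : ℕ)
variable (hEg : ∀ j, j ≤ m-2 → s(u j, u (j+1)) ≠ s(a, b))
variable (hFg : ∀ j, j ≤ n-2 → s(v j, v (j+1)) ≠ s(a, b))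
variable (hEinj : ∀ i, i ≤ m-2 → ∀ j, j ≤ m-2 → s(u i, u (i+1)) = s(u j, u (j+1)) → i = j)
variable (hFinj : ∀ i, i ≤ n-2 → ∀ j, j ≤ n-2 → s(v i, v (i+1)) = s(v j, v (j+1)) → i = j)
variable (hEF : ∀ i, i ≤ m-2 → ∀ j, j ≤ n-2 → s(u i, u (i+1)) ≠ s(v j, v (j+1)))
variable (huinj : ∀ i, i ≤ m-1 → ∀ j, j ≤ m-1 → u i = u j → i = j)
variable (hvinj : ∀ i, i ≤ n-1 → ∀ j, j ≤ n-1 → v i = v j → i = j)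
variable (hm3 : 3 ≤ m) (hn3 : 3 ≤ n)

include hm3 hn3

include hEg hFg in
lemma cw_g (x : V) (hx : x = a ∨ x = b) : cw a b u v m n x s(a, b) = 1 := by
  unfold cw
  rw [cwB_zero (fun j hj _ hh => hEg j (by omega) hh.symm),
    cwC_zero (fun j hj _ hh => hFg j (by omega) hh.symm)]
  unfold cwA
  rw [if_pos ⟨hx, rfl⟩]

include hEg hEinj hEF huinj in
lemma cw_E1 (j : ℕ) (hodd : Odd j) (hj : j ≤ m-2) :
    cw a b u v m n (u j) s(u j, u (j+1)) = 1 := by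
  unfold cw
  rw [cwB_single j (by omega) hodd
      (fun k hk _ hkj hh => hkj (hEinj k (by omega) j hj hh.symm)),
    cwC_zero (fun k hk _ hh => hEF j hj k (by omega) hh)]
  unfold cwA
  rw [if_neg (fun h => hEg j hj h.2), if_pos ⟨rfl, rfl⟩,
    if_neg (fun h => by have := huinj j (by omega) (j+1) (by omega) h.1; omega)]

include hEg hEinj hEF huinj in
lemma cw_E2 (j : ℕ) (hodd : Odd j) (hj : j ≤ m-2) :
    cw a b u v m n (u (j+1)) s(u j, u (j+1)) = 2 := by
  unfold cw
  rw [cwB_single j (by omega) hodd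
      (fun k hk _ hkj hh => hkj (hEinj k (by omega) j hj hh.symm)),
    cwC_zero (fun k hk _ hh => hEF j hj k (by omega) hh)]
  unfold cwA
  rw [if_neg (fun h => hEg j hj h.2),
    if_neg (fun h => by have := huinj (j+1) (by omega) j (by omega) h.1; omega),
    if_pos ⟨rfl, rfl⟩]

include hFg hFinj hEF hvinj in
lemma cw_F2 (j : ℕ) (heven : Even j) (hj : j ≤ n-3) :
    cw a b u v m n (v j) s(v j, v (j+1)) = 2 := by
  unfold cw
  rw [cwC_single j (by omega) heven
      (fun k hk _ hkj hh => hkj (hFinj k (by omega) j (by omega) hh.symm)),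
    cwB_zero (fun k hk _ hh => hEF k (by omega) j (by omega) hh.symm)]
  unfold cwA
  rw [if_neg (fun h => hFg j (by omega) h.2), if_pos ⟨rfl, rfl⟩,
    if_neg (fun h => by have := hvinj j (by omega) (j+1) (by omega) h.1; omega)]

include hFg hFinj hEF hvinj in
lemma cw_F1 (j : ℕ) (heven : Even j) (hj : j ≤ n-3) :
    cw a b u v m n (v (j+1)) s(v j, v (j+1)) = 1 := by
  unfold cw
  rw [cwC_single j (by omega) heven
      (fun k hk _ hkj hh => hkj (hFinj k (by omega) j (by omega) hh.symm)),
    cwB_zero (fun k hk _ hh => hEF k (by omega) j (by omega) hh.symm)]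
  unfold cwA
  rw [if_neg (fun h => hFg j (by omega) h.2),
    if_neg (fun h => by have := hvinj (j+1) (by omega) j (by omega) h.1; omega),
    if_pos ⟨rfl, rfl⟩]

include hEg hEinj hEF in
lemma cw_Ez (j : ℕ) (heven : Even j) (hj : j ≤ m-2) (x : V) :
    cw a b u v m n x s(u j, u (j+1)) = 0 := by
  unfold cw
  rw [cwB_zero (fun k hk hoddk hh => by
      have := hEinj j hj k (by omega) hh
      rcases hoddk with ⟨t, ht⟩; rcases heven with ⟨r, hr⟩; omega),
    cwC_zero (fun k hk _ hh => hEF j hj k (by omega) hh)]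
  unfold cwA
  rw [if_neg (fun h => hEg j hj h.2)]

include hFg hFinj hEF in
lemma cw_Fz (j : ℕ) (hodd : Odd j) (hj : j ≤ n-2) (x : V) :
    cw a b u v m n x s(v j, v (j+1)) = 0 := by
  unfold cw
  rw [cwC_zero (fun k hk hevenk hh => by
      have := hFinj j hj k (by omega) hh
      rcases hodd with ⟨t, ht⟩; rcases hevenk with ⟨r, hr⟩; omega),
    cwB_zero (fun k hk _ hh => hEF k (by omega) j hj hh.symm)]
  unfold cwA
  rw [if_neg (fun h => hFg j hj h.2)]

end CW

lemma cw_notmem (a b : V) (u v : ℕ → V) (m n : ℕ) (x : V) (e : Sym2 V) (hx : x ∉ e) :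
    cw a b u v m n x e = 0 := by
  have hB : cwB u m x e = 0 := by
    apply Finset.sum_eq_zero
    intro k _
    rw [if_neg (fun hh : x = u k ∧ e = s(u k, u (k+1)) =>
        hx (hh.2 ▸ (hh.1 ▸ Sym2.mem_iff.2 (Or.inl rfl)))),
      if_neg (fun hh : x = u (k+1) ∧ e = s(u k, u (k+1)) =>
        hx (hh.2 ▸ (hh.1 ▸ Sym2.mem_iff.2 (Or.inr rfl))))]
    rfl
  have hC : cwC v n x e = 0 := by
    apply Finset.sum_eq_zero
    intro k _
    rw [if_neg (fun hh : x = v k ∧ e = s(v k, v (k+1)) =>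
        hx (hh.2 ▸ (hh.1 ▸ Sym2.mem_iff.2 (Or.inl rfl)))),
      if_neg (fun hh : x = v (k+1) ∧ e = s(v k, v (k+1)) =>
        hx (hh.2 ▸ (hh.1 ▸ Sym2.mem_iff.2 (Or.inr rfl))))]
    rfl
  have hA : cwA a b x e = 0 := by
    unfold cwA
    rw [if_neg]
    rintro ⟨h1, rfl⟩
    rcases h1 with rfl | rfl
    · exact hx (Sym2.mem_iff.2 (Or.inl rfl))
    · exact hx (Sym2.mem_iff.2 (Or.inr rfl))
  unfold cw
  rw [hA, hB, hC]

lemma masterLemma [Fintype V] (G : SimpleGraph V) (head : Sym2 V → V)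
    (w : V → Sym2 V → ℕ) (m n : ℕ) (a b : V) (u v : ℕ → V)
    (hm3 : 3 ≤ m) (hn3 : 3 ≤ n) (hm : Odd m) (hn : Odd n) (hab : a ≠ b)
    (hu0 : u 0 = a) (hub : u (m-1) = b) (hv0 : v 0 = a) (hvb : v (n-1) = b)
    (hEedge : ∀ j, j ≤ m-2 → s(u j, u (j+1)) ∈ G.edgeSet)
    (hFedge : ∀ j, j ≤ n-2 → s(v j, v (j+1)) ∈ G.edgeSet)
    (hg : s(a, b) ∈ G.edgeSet)
    (hEinj : ∀ i, i ≤ m-2 → ∀ j, j ≤ m-2 → s(u i, u (i+1)) = s(u j, u (j+1)) → i = j)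
    (hFinj : ∀ i, i ≤ n-2 → ∀ j, j ≤ n-2 → s(v i, v (i+1)) = s(v j, v (j+1)) → i = j)
    (hEg : ∀ j, j ≤ m-2 → s(u j, u (j+1)) ≠ s(a, b))
    (hFg : ∀ j, j ≤ n-2 → s(v j, v (j+1)) ≠ s(a, b))
    (hEF00 : s(u 0, u 1) ≠ s(v 0, v 1))
    (huinj : ∀ i, i ≤ m-1 → ∀ j, j ≤ m-1 → u i = u j → i = j)
    (hvinj : ∀ i, i ≤ n-1 → ∀ j, j ≤ n-1 → v i = v j → i = j)
    (hIncU : ∀ j, 1 ≤ j → j ≤ m-2 → ∀ e, e ∈ G.edgeSet → u j ∈ e →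
        e = s(u (j-1), u j) ∨ e = s(u j, u (j+1)))
    (hIncV : ∀ j, 1 ≤ j → j ≤ n-2 → ∀ e, e ∈ G.edgeSet → v j ∈ e →
        e = s(v (j-1), v j) ∨ e = s(v j, v (j+1)))
    (hIncA : ∀ e, e ∈ G.edgeSet → a ∈ e → e = s(a, b) ∨ e = s(u 0, u 1) ∨ e = s(v 0, v 1))
    (hIncB : ∀ e, e ∈ G.edgeSet → b ∈ e →
        e = s(a, b) ∨ e = s(u (m-2), u (m-1)) ∨ e = s(v (n-2), v (n-1)))
    (wag : w a s(a, b) = 1) (wbg : w b s(a, b) = 1)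
    (waF0 : w a s(v 0, v 1) = 2) (wbE : w b s(u (m-2), u (m-1)) = 2)
    (wU1 : ∀ j, Odd j → j ≤ m-2 → w (u j) s(u j, u (j+1)) = 1)
    (wU2 : ∀ j, Odd j → j ≤ m-2 → w (u (j+1)) s(u j, u (j+1)) = 2)
    (wV1 : ∀ j, Even j → j ≤ n-3 → w (v (j+1)) s(v j, v (j+1)) = 1)
    (wV2 : ∀ j, Even j → j ≤ n-3 → w (v j) s(v j, v (j+1)) = 2)
    (wEz : ∀ j, Even j → j ≤ m-2 → ∀ x, w x s(u j, u (j+1)) = 0)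
    (wFz : ∀ j, Odd j → j ≤ n-2 → ∀ x, w x s(v j, v (j+1)) = 0)
    (horient : ∀ e, e ∈ G.edgeSet → head e ∈ e)
    (hstar : ∀ x g', g' ∈ G.edgeSet → valOf G w head x < w x g' →
        bundle G head (head g') = {g'})
    (hhead : head s(a, b) = b) : False := by
  obtain ⟨M, hM⟩ := hm
  obtain ⟨N, hN⟩ := hn
  have hn21 : n - 2 + 1 = n - 1 := by omega
  have hFgn : s(v (n-2), v (n-1)) ≠ s(a, b) := by
    have := hFg (n-2) le_rfl; rwa [hn21] at this
  have wFzn : ∀ x, w x s(v (n-2), v (n-1)) = 0 := fun x => by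
    have := wFz (n-2) ⟨N - 1, by omega⟩ le_rfl x; rwa [hn21] at this
  -- ascending chain along the u-cycle
  have chainII : ∀ k j, Odd j → j ≤ m - 2 → m - j ≤ k →
      s(u (j-1), u j) ∈ bundle G head (u j) → False := by
    intro k
    induction k with
    | zero => intro j hodd hjm hk _; omega
    | succ k ih =>
      intro j hodd hjm hk hmem
      obtain ⟨t, ht⟩ := hodd
      have hj1 : 1 ≤ j := by omega
      have hEj : s(u j, u (j+1)) ∈ G.edgeSet := hEedge j hjm
      have hEj1ne : s(u (j-1), u j) ≠ s(u j, u (j+1)) := by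
        intro hEq
        have h' : j - 1 + 1 = j := by omega
        have := hEinj (j-1) (by omega) j hjm (by rw [h']; exact hEq)
        omega
      have hune : u j ≠ u (j+1) := fun h => by
        have := huinj j (by omega) (j+1) (by omega) h; omega
      rcases Sym2.mem_iff.1 (horient _ hEj) with hh | hh
      · -- head (E j) = u j
        have hBu : bundle G head (u j) = {s(u j, u (j+1))} := by
          by_cases hjtop : j = m - 2
          · -- star from b
            have hub' : u (j+1) = b := by rw [show j + 1 = m - 1 by omega]; exact hub
            have hval : valOf G w head b ≤ 1 := by
              have hsub : bundle G head b ⊆ {s(a, b), s(v (n-2), v (n-1))} := by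
                intro e he
                obtain ⟨h1, h2⟩ := mem_bundle.1 he
                have hbe : b ∈ e := h2 ▸ horient e h1
                rcases hIncB e h1 hbe with rfl | rfl | rfl
                · simp
                · exfalso
                  rw [show m - 2 = j by omega, show m - 1 = j + 1 by omega] at h2
                  rw [hh] at h2
                  exact hune (h2 ▸ hub'.symm ▸ rfl)
                · simp
              calc valOf G w head b = ∑ e ∈ bundle G head b, w b e := rfl
                _ ≤ ∑ e ∈ ({s(a, b), s(v (n-2), v (n-1))} : Finset (Sym2 V)), w b e :=
                    Finset.sum_le_sum_of_subset hsub
                _ = w b s(a, b) + w b s(v (n-2), v (n-1)) :=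
                    Finset.sum_pair (fun h => hFgn h.symm)
                _ = 1 := by rw [wbg, wFzn]
            have hstar' := hstar b (s(u j, u (j+1))) hEj (by
              rw [show j = m - 2 by omega, show (m-2) + 1 = m - 1 by omega, wbE]; omega)
            rw [hh] at hstar'
            exact hstar'
          · -- j ≤ m - 4; star from u (j+1)
            have hval : valOf G w head (u (j+1)) = 0 := by
              apply Finset.sum_eq_zero
              intro e he
              obtain ⟨h1, h2⟩ := mem_bundle.1 he
              have hue : u (j+1) ∈ e := h2 ▸ horient e h1
              rcases hIncU (j+1) (by omega) (by omega) e h1 hue with rfl | rfl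
              · exfalso
                rw [show j + 1 - 1 = j from rfl] at h2
                rw [hh] at h2
                exact hune h2
              · exact wEz (j+1) (by exact ⟨t+1, by omega⟩) (by omega) _
            have hstar' := hstar (u (j+1)) (s(u j, u (j+1))) hEj (by
              rw [hval, wU2 j ⟨t, ht⟩ hjm]; omega)
            rw [hh] at hstar'
            exact hstar'
        rw [hBu] at hmem
        exact hEj1ne (Finset.mem_singleton.1 hmem)
      · -- head (E j) = u (j+1)
        have hvalj : valOf G w head (u j) = 0 := by
          apply Finset.sum_eq_zero
          intro e he
          obtain ⟨h1, h2⟩ := mem_bundle.1 he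
          have hue : u j ∈ e := h2 ▸ horient e h1
          rcases hIncU j hj1 hjm e h1 hue with rfl | rfl
          · have hz := wEz (j-1) ⟨t, by omega⟩ (by omega) (u j)
            rw [show j - 1 + 1 = j by omega] at hz
            exact hz
          · exfalso; rw [hh] at h2; exact hune h2.symm
        have hB := hstar (u j) (s(u j, u (j+1))) hEj (by
          rw [hvalj, wU1 j ⟨t, ht⟩ hjm]; omega)
        rw [hh] at hB
        by_cases hjtop : j = m - 2
        · have hub' : u (j+1) = b := by rw [show j + 1 = m - 1 by omega]; exact hub
          have hginX : s(a, b) ∈ bundle G head (u (j+1)) :=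
            mem_bundle.2 ⟨hg, by rw [hub']; exact hhead⟩
          rw [hB] at hginX
          exact hEg j hjm (Finset.mem_singleton.1 hginX).symm
        · have hnext : s(u (j+1), u (j+2)) ∈ bundle G head (u (j+2)) := by
            have hE1 : s(u (j+1), u (j+2)) ∈ G.edgeSet := hEedge (j+1) (by omega)
            rcases Sym2.mem_iff.1 (horient _ hE1) with h' | h'
            · exfalso
              have hmem1 : s(u (j+1), u (j+2)) ∈ bundle G head (u (j+1)) :=
                mem_bundle.2 ⟨hE1, h'⟩
              rw [hB] at hmem1
              have := hEinj (j+1) (by omega) j hjm (Finset.mem_singleton.1 hmem1)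
              omega
            · exact mem_bundle.2 ⟨hE1, h'⟩
          exact ih (j+2) ⟨t+1, by omega⟩ (by omega) (by omega)
            (by rw [show j + 2 - 1 = j + 1 from rfl]; exact hnext)
  -- now decide on head (F 0)
  have hF0edge : s(v 0, v 1) ∈ G.edgeSet := hFedge 0 (by omega)
  rcases Sym2.mem_iff.1 (horient _ hF0edge) with hh0 | hh0
  · -- head (F 0) = v 0 = a : Branch II
    have hval1 : valOf G w head (v 1) = 0 := by
      apply Finset.sum_eq_zero
      intro e he
      obtain ⟨h1, h2⟩ := mem_bundle.1 he
      have hve : v 1 ∈ e := h2 ▸ horient e h1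
      rcases hIncV 1 le_rfl (by omega) e h1 hve with rfl | rfl
      · exfalso
        rw [show (1:ℕ) - 1 = 0 from rfl] at h2
        rw [hh0] at h2
        have := hvinj 0 (by omega) 1 (by omega) h2
        omega
      · exact wFz 1 ⟨0, rfl⟩ (by omega) _
    have hXa := hstar (v 1) (s(v 0, v 1)) hF0edge (by
      rw [hval1, wV1 0 ⟨0, rfl⟩ (by omega)]; omega)
    rw [hh0] at hXa
    -- head (E 0)
    have hE0 : s(u 0, u 1) ∈ G.edgeSet := hEedge 0 (by omega)
    rcases Sym2.mem_iff.1 (horient _ hE0) with h' | h'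
    · have hmem0 : s(u 0, u 1) ∈ bundle G head (v 0) :=
        mem_bundle.2 ⟨hE0, by rw [h', hu0, ← hv0]⟩
      rw [hXa] at hmem0
      exact hEF00 (Finset.mem_singleton.1 hmem0)
    · exact chainII m 1 ⟨0, rfl⟩ (by omega) (by omega) (mem_bundle.2 ⟨hE0, h'⟩)
  · -- head (F 0) = v 1 : Branch I
    have hvala : valOf G w head a = 0 := by
      apply Finset.sum_eq_zero
      intro e he
      obtain ⟨h1, h2⟩ := mem_bundle.1 he
      have hae : a ∈ e := h2 ▸ horient e h1
      rcases hIncA e h1 hae with rfl | rfl | rfl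
      · exfalso; rw [hhead] at h2; exact hab h2.symm
      · exact wEz 0 ⟨0, rfl⟩ (by omega) _
      · exfalso
        rw [hh0] at h2
        have := hvinj 1 (by omega) 0 (by omega) (h2.trans hv0.symm)
        omega
    have hXb := hstar a (s(a, b)) hg (by rw [hvala, wag]; omega)
    rw [hhead] at hXb
    have hXv1 := hstar a (s(v 0, v 1)) hF0edge (by rw [hvala, waF0]; omega)
    rw [hh0] at hXv1
    -- ascending chain along the v-cycle
    have chainT : ∀ k j, Even j → j ≤ n - 3 → n - j ≤ k →
        bundle G head (v (j+1)) = {s(v j, v (j+1))} → False := by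
      intro k
      induction k with
      | zero => intro j heven hjn hk _; omega
      | succ k ih =>
        intro j heven hjn hk hX
        obtain ⟨t, ht⟩ := heven
        have hF1 : s(v (j+1), v (j+2)) ∈ G.edgeSet := hFedge (j+1) (by omega)
        have hmem2 : s(v (j+1), v (j+2)) ∈ bundle G head (v (j+2)) := by
          rcases Sym2.mem_iff.1 (horient _ hF1) with h' | h'
          · exfalso
            have hmem1 : s(v (j+1), v (j+2)) ∈ bundle G head (v (j+1)) :=
              mem_bundle.2 ⟨hF1, h'⟩
            rw [hX] at hmem1
            have := hFinj (j+1) (by omega) j (by omega) (Finset.mem_singleton.1 hmem1)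
            omega
          · exact mem_bundle.2 ⟨hF1, h'⟩
        by_cases hjtop : j = n - 3
        · have hBb : bundle G head (v (j+2)) = {s(a, b)} := by
            rw [show j + 2 = n - 1 by omega, hvb]; exact hXb
          rw [hBb] at hmem2
          exact hFg (j+1) (by omega) (Finset.mem_singleton.1 hmem2)
        · -- j ≤ n - 5
          have hF2 : s(v (j+2), v (j+3)) ∈ G.edgeSet := hFedge (j+2) (by omega)
          have hvne23 : v (j+2) ≠ v (j+3) := fun h => by
            have := hvinj (j+2) (by omega) (j+3) (by omega) h; omega
          rcases Sym2.mem_iff.1 (horient _ hF2) with h' | h'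
          · -- head (F (j+2)) = v (j+2)
            have hval3 : valOf G w head (v (j+3)) = 0 := by
              apply Finset.sum_eq_zero
              intro e he
              obtain ⟨h1, h2⟩ := mem_bundle.1 he
              have hve : v (j+3) ∈ e := h2 ▸ horient e h1
              rcases hIncV (j+3) (by omega) (by omega) e h1 hve with rfl | rfl
              · exfalso
                rw [show j + 3 - 1 = j + 2 from rfl] at h2
                rw [h'] at h2
                exact hvne23 h2
              · exact wFz (j+3) ⟨t+1, by omega⟩ (by omega) _
            have hBc := hstar (v (j+3)) (s(v (j+2), v (j+3))) hF2 (by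
              rw [hval3, wV1 (j+2) ⟨t+1, by omega⟩ (by omega)]; omega)
            rw [h'] at hBc
            rw [hBc] at hmem2
            have := hFinj (j+1) (by omega) (j+2) (by omega) (Finset.mem_singleton.1 hmem2)
            omega
          · -- head (F (j+2)) = v (j+3)
            have hval2 : valOf G w head (v (j+2)) = 0 := by
              apply Finset.sum_eq_zero
              intro e he
              obtain ⟨h1, h2⟩ := mem_bundle.1 he
              have hve : v (j+2) ∈ e := h2 ▸ horient e h1
              rcases hIncV (j+2) (by omega) (by omega) e h1 hve with rfl | rfl
              · exact wFz (j+1) ⟨t, by omega⟩ (by omega) _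
              · exfalso; rw [h'] at h2; exact hvne23 h2.symm
            have hBc := hstar (v (j+2)) (s(v (j+2), v (j+3))) hF2 (by
              rw [hval2, wV2 (j+2) ⟨t+1, by omega⟩ (by omega)]; omega)
            rw [h'] at hBc
            exact ih (j+2) ⟨t+1, by omega⟩ (by omega) (by omega) hBc
    exact chainT n 0 ⟨0, rfl⟩ (by omega) (by omega) hXv1

lemma normalizeCyc {m : ℕ} (c : ZMod m → V) (hc : Function.Injective c)
    (a b : V) (hE : s(a, b) ∈ cycleEdges c) :
    ∃ d : ZMod m → V, Function.Injective d ∧ cycleEdges d = cycleEdges c ∧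
      Set.range d = Set.range c ∧ d 0 = a ∧ d (-1) = b := by
  obtain ⟨i₀, hi₀⟩ := hE
  rcases Sym2.eq_iff.1 hi₀ with ⟨h1, h2⟩ | ⟨h1, h2⟩
  · -- c i₀ = a, c (i₀+1) = b : reverse direction
    refine ⟨fun j => c (i₀ - j), hc.comp sub_right_injective, ?_, ?_, by simpa using h1, ?_⟩
    · ext e
      simp only [cycleEdges, Set.mem_range]
      constructor
      · rintro ⟨i, rfl⟩
        refine ⟨i₀ - i - 1, ?_⟩
        show s(c (i₀ - i - 1), c (i₀ - i - 1 + 1)) = s(c (i₀ - i), c (i₀ - (i + 1)))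
        rw [show i₀ - i - 1 + 1 = i₀ - i by ring, show i₀ - (i + 1) = i₀ - i - 1 by ring]
        exact Sym2.eq_swap
      · rintro ⟨i, rfl⟩
        refine ⟨i₀ - i - 1, ?_⟩
        show s(c (i₀ - (i₀ - i - 1)), c (i₀ - (i₀ - i - 1 + 1))) = s(c i, c (i + 1))
        rw [show i₀ - (i₀ - i - 1) = i + 1 by ring, show i₀ - (i₀ - i - 1 + 1) = i by ring]
        exact Sym2.eq_swap
    · have hs : Function.Surjective (fun j : ZMod m => i₀ - j) := fun x => ⟨i₀ - x, by ring⟩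
      have : Set.range (fun j : ZMod m => c (i₀ - j)) = c '' Set.range (fun j : ZMod m => i₀ - j) :=
        (Set.range_comp c _)
      rw [this, hs.range_eq, Set.image_univ]
    · show c (i₀ - (-1)) = b
      rw [show i₀ - (-1) = i₀ + 1 by ring]
      exact h2
  · -- c i₀ = b, c (i₀+1) = a : shift
    refine ⟨fun j => c (i₀ + 1 + j), hc.comp (add_right_injective _), ?_, ?_, by simpa using h2, ?_⟩
    · ext e
      simp only [cycleEdges, Set.mem_range]
      constructor
      · rintro ⟨i, rfl⟩
        refine ⟨i₀ + 1 + i, ?_⟩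
        show s(c (i₀ + 1 + i), c (i₀ + 1 + i + 1)) = s(c (i₀ + 1 + i), c (i₀ + 1 + (i + 1)))
        rw [show i₀ + 1 + i + 1 = i₀ + 1 + (i + 1) by ring]
      · rintro ⟨i, rfl⟩
        refine ⟨i - i₀ - 1, ?_⟩
        show s(c (i₀ + 1 + (i - i₀ - 1)), c (i₀ + 1 + (i - i₀ - 1 + 1))) = s(c i, c (i + 1))
        rw [show i₀ + 1 + (i - i₀ - 1) = i by ring, show i₀ + 1 + (i - i₀ - 1 + 1) = i + 1 by ring]
    · have hs : Function.Surjective (fun j : ZMod m => i₀ + 1 + j) := fun x => ⟨x - i₀ - 1, by ring⟩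
      have : Set.range (fun j : ZMod m => c (i₀ + 1 + j)) =
          c '' Set.range (fun j : ZMod m => i₀ + 1 + j) := (Set.range_comp c _)
      rw [this, hs.range_eq, Set.image_univ]
    · show c (i₀ + 1 + (-1)) = b
      rw [show i₀ + 1 + (-1) = i₀ by ring]
      exact h1

structure CycData {V : Type*} (mm : ℕ) (d : ZMod mm → V) (a b : V) (u : ℕ → V) : Prop where
  uinj : ∀ i, i ≤ mm-1 → ∀ j, j ≤ mm-1 → u i = u j → i = j
  u0 : u 0 = a
  ub : u (mm-1) = b
  ecyc : ∀ j : ℕ, s(u j, u (j+1)) ∈ cycleEdges d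
  einj : ∀ i, i ≤ mm-2 → ∀ j, j ≤ mm-2 → s(u i, u (i+1)) = s(u j, u (j+1)) → i = j
  eg : ∀ j, j ≤ mm-2 → s(u j, u (j+1)) ≠ s(a, b)
  inc : ∀ j, 1 ≤ j → j ≤ mm-2 → ∀ e ∈ cycleEdges d, u j ∈ e →
      e = s(u (j-1), u j) ∨ e = s(u j, u (j+1))
  incA : ∀ e ∈ cycleEdges d, a ∈ e → e = s(a, b) ∨ e = s(u 0, u 1)
  incB : ∀ e ∈ cycleEdges d, b ∈ e → e = s(a, b) ∨ e = s(u (mm-2), u (mm-1))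
  rng : ∀ j, u j ∈ Set.range d
  gmem : s(a, b) ∈ cycleEdges d

lemma cycData' {mm : ℕ} (hm3 : 3 ≤ mm) (d : ZMod mm → V) (hd : Function.Injective d)
    (a b : V) (h0 : d 0 = a) (hb : d (-1) = b) :
    CycData mm d a b (fun j => d (j : ZMod mm)) := by
  haveI : NeZero mm := ⟨by omega⟩
  have hcast : ∀ j : ℕ, ((j+1 : ℕ) : ZMod mm) = (j : ZMod mm) + 1 := fun j => by
    push_cast; ring
  have hm1 : ((mm-1 : ℕ) : ZMod mm) = -1 := by
    have := natz_neg (m := mm) (k := 1) (by omega)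
    simpa using this
  have hm2 : ((mm-2 : ℕ) : ZMod mm) = -2 := by
    have := natz_neg (m := mm) (k := 2) (by omega)
    rw [this]; push_cast; ring
  have hsab : s(a, b) = s(d (-1 : ZMod mm), d ((-1 : ZMod mm) + 1)) := by
    rw [show (-1 : ZMod mm) + 1 = 0 by ring, hb, h0]; exact Sym2.eq_swap
  refine ⟨?_, ?_, ?_, ?_, ?_, ?_, ?_, ?_, ?_, ?_, ?_⟩
  · -- uinj
    intro i hi j hj h
    exact natz_inj (by omega) hi hj (hd h)
  · -- u0
    show d ((0:ℕ) : ZMod mm) = a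
    rw [Nat.cast_zero]; exact h0
  · -- ub
    show d ((mm-1 : ℕ) : ZMod mm) = b
    rw [hm1]; exact hb
  · -- ecyc
    intro j
    exact ⟨(j : ZMod mm), by
      show s(d (j : ZMod mm), d ((j : ZMod mm) + 1)) = s(d (j : ZMod mm), d ((j+1 : ℕ) : ZMod mm))
      rw [hcast j]⟩
  · -- einj
    intro i hi j hj h
    have h' : s(d (i : ZMod mm), d ((i : ZMod mm)+1)) = s(d (j : ZMod mm), d ((j : ZMod mm)+1)) := by
      rw [← hcast i, ← hcast j]; exact h
    exact natz_inj (by omega) (by omega) (by omega) (zedge_inj hm3 d hd h')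
  · -- eg
    intro j hj h
    have h' : s(d (j : ZMod mm), d ((j : ZMod mm)+1)) = s(d (-1 : ZMod mm), d ((-1 : ZMod mm)+1)) := by
      rw [← hcast j, ← hsab]; exact h
    have h2 := zedge_inj hm3 d hd h'
    rw [← hm1] at h2
    have := natz_inj (by omega) (by omega) (le_refl (mm-1)) h2
    omega
  · -- inc
    intro j h1 h2 e he hmem
    rcases he with ⟨k, rfl⟩
    have hmem' : d (j : ZMod mm) = d k ∨ d (j : ZMod mm) = d (k+1) := Sym2.mem_iff.1 hmem
    rcases hmem' with hh | hh
    · right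
      have hkj : k = (j : ZMod mm) := (hd hh).symm
      show s(d k, d (k+1)) = s(d (j : ZMod mm), d ((j+1 : ℕ) : ZMod mm))
      rw [hkj, hcast j]
    · left
      have hkj : k + 1 = (j : ZMod mm) := (hd hh).symm
      have hk' : k = ((j-1 : ℕ) : ZMod mm) := by
        rw [Nat.cast_sub (by exact_mod_cast h1), Nat.cast_one]
        rw [← hkj]; ring
      show s(d k, d (k+1)) = s(d ((j-1 : ℕ) : ZMod mm), d ((j : ℕ) : ZMod mm))
      rw [hkj, hk']
  · -- incA
    intro e he hmem
    rcases he with ⟨k, rfl⟩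
    have hmem' : a = d k ∨ a = d (k+1) := Sym2.mem_iff.1 hmem
    rcases hmem' with hh | hh
    · right
      have hk0 : k = 0 := hd (hh.symm.trans h0.symm)
      show s(d k, d (k+1)) = s(d ((0:ℕ) : ZMod mm), d ((1:ℕ) : ZMod mm))
      rw [hk0, Nat.cast_zero, Nat.cast_one, zero_add]
    · left
      have hk0 : k + 1 = 0 := hd (hh.symm.trans h0.symm)
      have hk1 : k = -1 := by rw [← neg_add_cancel (1 : ZMod mm)] at hk0; exact add_right_cancel hk0
      rw [hsab, hk1]
  · -- incB
    intro e he hmem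
    rcases he with ⟨k, rfl⟩
    have hmem' : b = d k ∨ b = d (k+1) := Sym2.mem_iff.1 hmem
    rcases hmem' with hh | hh
    · left
      have hk1 : k = -1 := hd (hh.symm.trans hb.symm)
      rw [hsab, hk1]
    · right
      have hk0 : k + 1 = -1 := hd (hh.symm.trans hb.symm)
      have hk1 : k = -2 := by
        have : k = -1 - 1 := by rw [← hk0]; ring
        rw [this]; ring
      show s(d k, d (k+1)) = s(d ((mm-2 : ℕ) : ZMod mm), d ((mm-1 : ℕ) : ZMod mm))
      rw [hm1, hm2, hk1]
      norm_num
  · -- rng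
    intro j
    exact ⟨(j : ZMod mm), rfl⟩
  · -- gmem
    exact ⟨-1, by
      show s(d (-1 : ZMod mm), d ((-1 : ZMod mm) + 1)) = s(a, b)
      rw [show (-1 : ZMod mm) + 1 = 0 by ring, h0, hb]
      exact Sym2.eq_swap⟩

lemma cycData {mm : ℕ} (hm3 : 3 ≤ mm) (d : ZMod mm → V) (hd : Function.Injective d)
    (a b : V) (h0 : d 0 = a) (hb : d (-1) = b) :
    ∃ u : ℕ → V, CycData mm d a b u :=
  ⟨_, cycData' hm3 d hd a b h0 hb⟩

noncomputable def cwF [Fintype V] (G : SimpleGraph V) (w : V → Sym2 V → ℕ)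
    (x : V) (S : Set (Sym2 V)) : NNReal :=
  ∑ e ∈ Finset.univ.filter (fun e => e ∈ G.edgeSet ∧ e ∈ S), ((w x e : ℕ) : NNReal)

lemma cwF_mono [Fintype V] (G : SimpleGraph V) (w : V → Sym2 V → ℕ) (x : V) :
    Monotone (cwF G w x) := by
  intro S T hST
  apply Finset.sum_le_sum_of_subset
  intro e he
  simp only [Finset.mem_filter, Finset.mem_univ, true_and] at he ⊢
  exact ⟨he.1, hST he.2⟩

lemma cwF_graph [Fintype V] (G : SimpleGraph V) (w : V → Sym2 V → ℕ)
    (hw : ∀ x e, x ∉ e → w x e = 0) (x : V) (S : Set (Sym2 V)) :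
    cwF G w x S = cwF G w x (S ∩ G.incidenceSet x) := by
  unfold cwF
  symm
  apply Finset.sum_subset
  · intro e he
    simp only [Finset.mem_filter, Finset.mem_univ, true_and] at he ⊢
    exact ⟨he.1, he.2.1⟩
  · intro e he hne
    simp only [Finset.mem_filter, Finset.mem_univ, true_and] at he hne
    have hxe : x ∉ e := by
      intro hxe
      exact hne ⟨he.1, he.2, ⟨he.1, hxe⟩⟩
    rw [hw x e hxe]
    simp

lemma cwF_ge_single [Fintype V] (G : SimpleGraph V) (w : V → Sym2 V → ℕ)
    (x : V) (S : Set (Sym2 V)) (g' : Sym2 V) (hgE : g' ∈ G.edgeSet) (hgS : g' ∈ S) :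
    ((w x g' : ℕ) : NNReal) ≤ cwF G w x S := by
  unfold cwF
  apply Finset.single_le_sum (f := fun e => ((w x e : ℕ) : NNReal)) (fun i _ => zero_le)
  simp only [Finset.mem_filter, Finset.mem_univ, true_and]
  exact ⟨hgE, hgS⟩

lemma cwF_bundleSet [Fintype V] (G : SimpleGraph V) (w : V → Sym2 V → ℕ)
    (head : Sym2 V → V) (x : V) :
    cwF G w x (bundleSet G head x) = ((valOf G w head x : ℕ) : NNReal) := by
  unfold cwF
  rw [valOf, Nat.cast_sum]
  apply Finset.sum_congr
  · ext e
    simp only [Finset.mem_filter, Finset.mem_univ, true_and, mem_bundle]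
    constructor
    · rintro ⟨h1, h2⟩; exact ⟨h1, h2.2⟩
    · rintro ⟨h1, h2⟩; exact ⟨h1, ⟨h1, h2⟩⟩
  · intros; rfl

/-- The union of two odd cycles whose intersection is exactly one edge
(they share exactly two vertices, which are adjacent, together with the edge between them)
is not strongly EFX-orientable. -/
theorem not_stronglyEFXOrientable_oddCycles_sharing_edge [Fintype V] (G : SimpleGraph V)
    (m n : ℕ) (hm : Odd m) (hm3 : 3 ≤ m) (hn : Odd n) (hn3 : 3 ≤ n)
    (c₁ : ZMod m → V) (c₂ : ZMod n → V)
    (hc₁ : Function.Injective c₁) (hc₂ : Function.Injective c₂)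
    (a b : V) (hab : a ≠ b)
    (hvert : Set.range c₁ ∩ Set.range c₂ = {a, b})
    (hedge : cycleEdges c₁ ∩ cycleEdges c₂ = {s(a, b)})
    (hG : G = SimpleGraph.fromEdgeSet (cycleEdges c₁ ∪ cycleEdges c₂)) :
    ¬ StronglyEFXOrientable G := by
  intro hS
  obtain ⟨M, hM⟩ := id hm
  obtain ⟨N, hN⟩ := id hn
  -- the shared edge lies in both cycles
  have hsab1 : s(a, b) ∈ cycleEdges c₁ := by
    have h : s(a, b) ∈ ({s(a, b)} : Set (Sym2 V)) := rfl
    rw [← hedge] at h; exact h.1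
  have hsab2 : s(a, b) ∈ cycleEdges c₂ := by
    have h : s(a, b) ∈ ({s(a, b)} : Set (Sym2 V)) := rfl
    rw [← hedge] at h; exact h.2
  -- normalize the two cycles
  obtain ⟨d₁, hd₁inj, hd₁cyc, hd₁rng, hd₁0, hd₁b⟩ := normalizeCyc c₁ hc₁ a b hsab1
  obtain ⟨d₂, hd₂inj, hd₂cyc, hd₂rng, hd₂0, hd₂b⟩ := normalizeCyc c₂ hc₂ a b hsab2
  obtain ⟨u, C1⟩ := cycData hm3 d₁ hd₁inj a b hd₁0 hd₁b
  obtain ⟨v, C2⟩ := cycData hn3 d₂ hd₂inj a b hd₂0 hd₂b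
  -- edge set of G
  have hGedge : ∀ e : Sym2 V, e ∈ G.edgeSet ↔
      (e ∈ cycleEdges c₁ ∨ e ∈ cycleEdges c₂) ∧ ¬ e.IsDiag := by
    intro e
    rw [hG, edgeSet_fromEdgeSet]
    simp [Set.mem_union]
  -- interior vertices belong to only one cycle
  have huint : ∀ j, 1 ≤ j → j ≤ m-2 → u j ∉ Set.range c₂ := by
    intro j h1 h2 hmem
    have hu1 : u j ∈ Set.range c₁ := by rw [← hd₁rng]; exact C1.rng j
    have hab' : u j ∈ ({a, b} : Set V) := by rw [← hvert]; exact ⟨hu1, hmem⟩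
    simp only [Set.mem_insert_iff, Set.mem_singleton_iff] at hab'
    rcases hab' with h | h
    · have := C1.uinj j (by omega) 0 (by omega) (h.trans C1.u0.symm); omega
    · have := C1.uinj j (by omega) (m-1) (by omega) (h.trans C1.ub.symm); omega
  have hvint : ∀ j, 1 ≤ j → j ≤ n-2 → v j ∉ Set.range c₁ := by
    intro j h1 h2 hmem
    have hv1 : v j ∈ Set.range c₂ := by rw [← hd₂rng]; exact C2.rng j
    have hab' : v j ∈ ({a, b} : Set V) := by rw [← hvert]; exact ⟨hmem, hv1⟩
    simp only [Set.mem_insert_iff, Set.mem_singleton_iff] at hab'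
    rcases hab' with h | h
    · have := C2.uinj j (by omega) 0 (by omega) (h.trans C2.u0.symm); omega
    · have := C2.uinj j (by omega) (n-1) (by omega) (h.trans C2.ub.symm); omega
  -- edges of G
  have hEedge : ∀ j, j ≤ m-2 → s(u j, u (j+1)) ∈ G.edgeSet := by
    intro j hj
    rw [hGedge]
    refine ⟨Or.inl ?_, ?_⟩
    · rw [← hd₁cyc]; exact C1.ecyc j
    · rw [Sym2.mk_isDiag_iff]
      intro h
      have := C1.uinj j (by omega) (j+1) (by omega) h; omega
  have hFedge : ∀ j, j ≤ n-2 → s(v j, v (j+1)) ∈ G.edgeSet := by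
    intro j hj
    rw [hGedge]
    refine ⟨Or.inr ?_, ?_⟩
    · rw [← hd₂cyc]; exact C2.ecyc j
    · rw [Sym2.mk_isDiag_iff]
      intro h
      have := C2.uinj j (by omega) (j+1) (by omega) h; omega
  have hgE : s(a, b) ∈ G.edgeSet := by
    rw [hGedge]
    exact ⟨Or.inl hsab1, by rw [Sym2.mk_isDiag_iff]; exact hab⟩
  -- distinct edges across the two cycles
  have hEF : ∀ i, i ≤ m-2 → ∀ j, j ≤ n-2 → s(u i, u (i+1)) ≠ s(v j, v (j+1)) := by
    intro i hi j hj h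
    have key : ∀ l, 1 ≤ l → l ≤ m-2 → u l ∈ s(v j, v (j+1)) → False := by
      intro l h1 h2 hmem
      apply huint l h1 h2
      rcases Sym2.mem_iff.1 hmem with hh | hh
      · rw [hh, ← hd₂rng]; exact C2.rng j
      · rw [hh, ← hd₂rng]; exact C2.rng (j+1)
    rcases Nat.eq_zero_or_pos i with rfl | hipos
    · exact key 1 le_rfl (by omega) (h ▸ Sym2.mem_iff.2 (Or.inr rfl))
    · exact key i hipos hi (h ▸ Sym2.mem_iff.2 (Or.inl rfl))
  -- incidence characterizations
  have hIncU : ∀ j, 1 ≤ j → j ≤ m-2 → ∀ e, e ∈ G.edgeSet → u j ∈ e →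
      e = s(u (j-1), u j) ∨ e = s(u j, u (j+1)) := by
    intro j h1 h2 e he hmem
    rcases ((hGedge e).1 he).1 with h | h
    · rw [← hd₁cyc] at h
      exact C1.inc j h1 h2 e h hmem
    · exfalso
      apply huint j h1 h2
      rw [← hd₂cyc] at h
      rcases h with ⟨k, hk⟩
      have hm' : u j ∈ s(d₂ k, d₂ (k+1)) := by rw [← hk] at hmem; exact hmem
      rcases Sym2.mem_iff.1 hm' with hh | hh
      · rw [hh, ← hd₂rng]; exact ⟨k, rfl⟩
      · rw [hh, ← hd₂rng]; exact ⟨k+1, rfl⟩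
  have hIncV : ∀ j, 1 ≤ j → j ≤ n-2 → ∀ e, e ∈ G.edgeSet → v j ∈ e →
      e = s(v (j-1), v j) ∨ e = s(v j, v (j+1)) := by
    intro j h1 h2 e he hmem
    rcases ((hGedge e).1 he).1 with h | h
    · exfalso
      apply hvint j h1 h2
      rw [← hd₁cyc] at h
      rcases h with ⟨k, hk⟩
      have hm' : v j ∈ s(d₁ k, d₁ (k+1)) := by rw [← hk] at hmem; exact hmem
      rcases Sym2.mem_iff.1 hm' with hh | hh
      · rw [hh, ← hd₁rng]; exact ⟨k, rfl⟩
      · rw [hh, ← hd₁rng]; exact ⟨k+1, rfl⟩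
    · rw [← hd₂cyc] at h
      exact C2.inc j h1 h2 e h hmem
  have hIncA : ∀ e, e ∈ G.edgeSet → a ∈ e →
      e = s(a, b) ∨ e = s(u 0, u 1) ∨ e = s(v 0, v 1) := by
    intro e he hmem
    rcases ((hGedge e).1 he).1 with h | h
    · rw [← hd₁cyc] at h
      rcases C1.incA e h hmem with h' | h'
      · exact Or.inl h'
      · exact Or.inr (Or.inl h')
    · rw [← hd₂cyc] at h
      rcases C2.incA e h hmem with h' | h'
      · exact Or.inl h'
      · exact Or.inr (Or.inr h')
  have hIncB : ∀ e, e ∈ G.edgeSet → b ∈ e →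
      e = s(a, b) ∨ e = s(u (m-2), u (m-1)) ∨ e = s(v (n-2), v (n-1)) := by
    intro e he hmem
    rcases ((hGedge e).1 he).1 with h | h
    · rw [← hd₁cyc] at h
      rcases C1.incB e h hmem with h' | h'
      · exact Or.inl h'
      · exact Or.inr (Or.inl h')
    · rw [← hd₂cyc] at h
      rcases C2.incB e h hmem with h' | h'
      · exact Or.inl h'
      · exact Or.inr (Or.inr h')
  -- the weight table
  have wag : cw a b u v m n a s(a, b) = 1 := cw_g a b u v m n C1.eg C2.eg hm3 hn3 a (Or.inl rfl)
  have wbg : cw a b u v m n b s(a, b) = 1 := cw_g a b u v m n C1.eg C2.eg hm3 hn3 b (Or.inr rfl)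
  have wU1 : ∀ j, Odd j → j ≤ m-2 → cw a b u v m n (u j) s(u j, u (j+1)) = 1 :=
    fun j hj hjm => cw_E1 a b u v m n C1.eg C1.einj hEF C1.uinj hm3 hn3 j hj hjm
  have wU2 : ∀ j, Odd j → j ≤ m-2 → cw a b u v m n (u (j+1)) s(u j, u (j+1)) = 2 :=
    fun j hj hjm => cw_E2 a b u v m n C1.eg C1.einj hEF C1.uinj hm3 hn3 j hj hjm
  have wV1 : ∀ j, Even j → j ≤ n-3 → cw a b u v m n (v (j+1)) s(v j, v (j+1)) = 1 :=
    fun j hj hjn => cw_F1 a b u v m n C2.eg C2.einj hEF C2.uinj hm3 hn3 j hj hjn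
  have wV2 : ∀ j, Even j → j ≤ n-3 → cw a b u v m n (v j) s(v j, v (j+1)) = 2 :=
    fun j hj hjn => cw_F2 a b u v m n C2.eg C2.einj hEF C2.uinj hm3 hn3 j hj hjn
  have wEz : ∀ j, Even j → j ≤ m-2 → ∀ x, cw a b u v m n x s(u j, u (j+1)) = 0 :=
    fun j hj hjm x => cw_Ez a b u v m n C1.eg C1.einj hEF hm3 hn3 j hj hjm x
  have wFz : ∀ j, Odd j → j ≤ n-2 → ∀ x, cw a b u v m n x s(v j, v (j+1)) = 0 :=
    fun j hj hjn x => cw_Fz a b u v m n C2.eg C2.einj hEF hm3 hn3 j hj hjn x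
  have waF0 : cw a b u v m n a s(v 0, v 1) = 2 := by
    have h2 := wV2 0 ⟨0, rfl⟩ (by omega)
    have h3 : cw a b u v m n (v 0) s(v 0, v 1) = cw a b u v m n a s(v 0, v 1) :=
      congrArg (fun x => cw a b u v m n x s(v 0, v 1)) C2.u0
    rw [← h3]; exact h2
  have wbE : cw a b u v m n b s(u (m-2), u (m-1)) = 2 := by
    have h2 := wU2 (m-2) ⟨M-1, by omega⟩ le_rfl
    rw [show m-2+1 = m-1 by omega] at h2
    have h3 : cw a b u v m n (u (m-1)) s(u (m-2), u (m-1)) =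
        cw a b u v m n b s(u (m-2), u (m-1)) :=
      congrArg (fun x => cw a b u v m n x s(u (m-2), u (m-1))) C1.ub
    rw [← h3]; exact h2
  -- apply strong EFX-orientability to the associated additive valuation
  obtain ⟨head, horient0, hEFX⟩ := hS (cwF G (cw a b u v m n))
    (fun x => cwF_mono G (cw a b u v m n) x)
    (cwF_graph G (cw a b u v m n) (fun x e hxe => cw_notmem a b u v m n x e hxe))
  -- the EFX star property
  have hstar : ∀ x g', g' ∈ G.edgeSet → valOf G (cw a b u v m n) head x < cw a b u v m n x g' →
      bundle G head (head g') = {g'} := by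
    intro x g' hgE' hlt
    by_contra hne
    have hg'mem : g' ∈ bundle G head (head g') := mem_bundle.2 ⟨hgE', rfl⟩
    obtain ⟨g, hgmem, hggne⟩ : ∃ g ∈ bundle G head (head g'), g ≠ g' := by
      by_contra hno
      push_neg at hno
      exact hne (Finset.eq_singleton_iff_unique_mem.2 ⟨hg'mem, hno⟩)
    have hgbs : g ∈ bundleSet G head (head g') := by
      have h := mem_bundle.1 hgmem
      exact ⟨h.1, h.2⟩
    have hEFXi := hEFX x (head g') g hgbs
    have hL : ((cw a b u v m n x g' : ℕ) : NNReal) ≤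
        cwF G (cw a b u v m n) x (bundleSet G head (head g') \ {g}) := by
      apply cwF_ge_single G (cw a b u v m n) x _ g' hgE'
      refine ⟨⟨hgE', rfl⟩, ?_⟩
      simp only [Set.mem_singleton_iff]
      exact fun h => hggne h.symm
    have hR := cwF_bundleSet G (cw a b u v m n) head x
    have hfin : ((cw a b u v m n x g' : ℕ) : NNReal) ≤
        ((valOf G (cw a b u v m n) head x : ℕ) : NNReal) :=
      le_trans hL (le_trans hEFXi (le_of_eq hR))
    have := Nat.cast_le.1 hfin
    omega
  -- case analysis on the head of the shared edge
  rcases Sym2.mem_iff.1 (horient0 s(a, b) hgE) with hha | hhb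
  · -- head s(a,b) = a : use the reflected configuration
    apply masterLemma G head (cw a b u v m n) n m b a
      (fun j => v (n-1-j)) (fun j => u (m-1-j))
      hn3 hm3 hn hm (Ne.symm hab)
    · -- u' 0 = b
      show v (n-1-0) = b
      exact C2.ub
    · -- u' (n-1) = a
      show v (n-1-(n-1)) = a
      rw [show n-1-(n-1) = 0 by omega]; exact C2.u0
    · -- v' 0 = b
      show u (m-1-0) = b
      exact C1.ub
    · -- v' (m-1) = a
      show u (m-1-(m-1)) = a
      rw [show m-1-(m-1) = 0 by omega]; exact C1.u0
    · -- E' edges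
      intro j hj
      show s(v (n-1-j), v (n-1-(j+1))) ∈ G.edgeSet
      rw [show n-1-(j+1) = n-2-j by omega, show n-1-j = (n-2-j)+1 by omega, Sym2.eq_swap]
      exact hFedge (n-2-j) (by omega)
    · -- F' edges
      intro j hj
      show s(u (m-1-j), u (m-1-(j+1))) ∈ G.edgeSet
      rw [show m-1-(j+1) = m-2-j by omega, show m-1-j = (m-2-j)+1 by omega, Sym2.eq_swap]
      exact hEedge (m-2-j) (by omega)
    · -- shared edge
      rw [Sym2.eq_swap]; exact hgE
    · -- E' injective
      intro i hi j hj h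
      have h' : s(v (n-2-i), v ((n-2-i)+1)) = s(v (n-2-j), v ((n-2-j)+1)) := by
        calc s(v (n-2-i), v ((n-2-i)+1)) = s(v ((n-2-i)+1), v (n-2-i)) := Sym2.eq_swap
          _ = s(v (n-1-i), v (n-1-(i+1))) := by
              rw [show (n-2-i)+1 = n-1-i by omega, show n-2-i = n-1-(i+1) by omega]
          _ = s(v (n-1-j), v (n-1-(j+1))) := h
          _ = s(v ((n-2-j)+1), v (n-2-j)) := by
              rw [show n-1-j = (n-2-j)+1 by omega, show n-1-(j+1) = n-2-j by omega]
          _ = s(v (n-2-j), v ((n-2-j)+1)) := Sym2.eq_swap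
      have := C2.einj (n-2-i) (by omega) (n-2-j) (by omega) h'
      omega
    · -- F' injective
      intro i hi j hj h
      have h' : s(u (m-2-i), u ((m-2-i)+1)) = s(u (m-2-j), u ((m-2-j)+1)) := by
        calc s(u (m-2-i), u ((m-2-i)+1)) = s(u ((m-2-i)+1), u (m-2-i)) := Sym2.eq_swap
          _ = s(u (m-1-i), u (m-1-(i+1))) := by
              rw [show (m-2-i)+1 = m-1-i by omega, show m-2-i = m-1-(i+1) by omega]
          _ = s(u (m-1-j), u (m-1-(j+1))) := h
          _ = s(u ((m-2-j)+1), u (m-2-j)) := by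
              rw [show m-1-j = (m-2-j)+1 by omega, show m-1-(j+1) = m-2-j by omega]
          _ = s(u (m-2-j), u ((m-2-j)+1)) := Sym2.eq_swap
      have := C1.einj (m-2-i) (by omega) (m-2-j) (by omega) h'
      omega
    · -- E' ≠ shared
      intro j hj h
      apply C2.eg (n-2-j) (by omega)
      rw [show (n-2-j)+1 = n-1-j by omega]
      calc s(v (n-2-j), v (n-1-j)) = s(v (n-1-j), v (n-2-j)) := Sym2.eq_swap
        _ = s(v (n-1-j), v (n-1-(j+1))) := by rw [show n-1-(j+1) = n-2-j by omega]
        _ = s(b, a) := h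
        _ = s(a, b) := Sym2.eq_swap
    · -- F' ≠ shared
      intro j hj h
      apply C1.eg (m-2-j) (by omega)
      rw [show (m-2-j)+1 = m-1-j by omega]
      calc s(u (m-2-j), u (m-1-j)) = s(u (m-1-j), u (m-2-j)) := Sym2.eq_swap
        _ = s(u (m-1-j), u (m-1-(j+1))) := by rw [show m-1-(j+1) = m-2-j by omega]
        _ = s(b, a) := h
        _ = s(a, b) := Sym2.eq_swap
    · -- E' 0 ≠ F' 0
      intro h
      apply hEF (m-2) le_rfl (n-2) le_rfl
      rw [show (m-2)+1 = m-1 by omega, show (n-2)+1 = n-1 by omega]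
      calc s(u (m-2), u (m-1)) = s(u (m-1), u (m-2)) := Sym2.eq_swap
        _ = s(u (m-1-0), u (m-1-1)) := by rw [show m-1-0 = m-1 by omega, show m-1-1 = m-2 by omega]
        _ = s(v (n-1-0), v (n-1-1)) := h.symm
        _ = s(v (n-1), v (n-2)) := by rw [show n-1-0 = n-1 by omega, show n-1-1 = n-2 by omega]
        _ = s(v (n-2), v (n-1)) := Sym2.eq_swap
    · -- u' injective
      intro i hi j hj h
      have := C2.uinj (n-1-i) (by omega) (n-1-j) (by omega) h
      omega
    · -- v' injective
      intro i hi j hj h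
      have := C1.uinj (m-1-i) (by omega) (m-1-j) (by omega) h
      omega
    · -- Inc for u'
      intro j h1 h2 e he hmem
      have hmem' : v (n-1-j) ∈ e := hmem
      rcases hIncV (n-1-j) (by omega) (by omega) e he hmem' with h | h
      · right
        rw [h]
        show s(v (n-1-j-1), v (n-1-j)) = s(v (n-1-j), v (n-1-(j+1)))
        rw [show n-1-j-1 = n-1-(j+1) by omega]
        exact Sym2.eq_swap
      · left
        rw [h]
        show s(v (n-1-j), v (n-1-j+1)) = s(v (n-1-(j-1)), v (n-1-j))
        rw [show n-1-j+1 = n-1-(j-1) by omega]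
        exact Sym2.eq_swap
    · -- Inc for v'
      intro j h1 h2 e he hmem
      have hmem' : u (m-1-j) ∈ e := hmem
      rcases hIncU (m-1-j) (by omega) (by omega) e he hmem' with h | h
      · right
        rw [h]
        show s(u (m-1-j-1), u (m-1-j)) = s(u (m-1-j), u (m-1-(j+1)))
        rw [show m-1-j-1 = m-1-(j+1) by omega]
        exact Sym2.eq_swap
      · left
        rw [h]
        show s(u (m-1-j), u (m-1-j+1)) = s(u (m-1-(j-1)), u (m-1-j))
        rw [show m-1-j+1 = m-1-(j-1) by omega]
        exact Sym2.eq_swap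
    · -- IncA for b
      intro e he hmem
      rcases hIncB e he hmem with h | h | h
      · left; rw [h]; exact Sym2.eq_swap
      · right; right
        rw [h]
        show s(u (m-2), u (m-1)) = s(u (m-1-0), u (m-1-1))
        rw [show m-1-0 = m-1 by omega, show m-1-1 = m-2 by omega]
        exact Sym2.eq_swap
      · right; left
        rw [h]
        show s(v (n-2), v (n-1)) = s(v (n-1-0), v (n-1-1))
        rw [show n-1-0 = n-1 by omega, show n-1-1 = n-2 by omega]
        exact Sym2.eq_swap
    · -- IncB for a
      intro e he hmem
      rcases hIncA e he hmem with h | h | h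
      · left; rw [h]; exact Sym2.eq_swap
      · right; right
        rw [h]
        show s(u 0, u 1) = s(u (m-1-(m-2)), u (m-1-(m-1)))
        rw [show m-1-(m-2) = 1 by omega, show m-1-(m-1) = 0 by omega]
        exact Sym2.eq_swap
      · right; left
        rw [h]
        show s(v 0, v 1) = s(v (n-1-(n-2)), v (n-1-(n-1)))
        rw [show n-1-(n-2) = 1 by omega, show n-1-(n-1) = 0 by omega]
        exact Sym2.eq_swap
    · -- wag'
      rw [Sym2.eq_swap]; exact wbg
    · -- wbg'
      rw [Sym2.eq_swap]; exact wag
    · -- waF0'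
      show cw a b u v m n b s(u (m-1-0), u (m-1-1)) = 2
      rw [show m-1-0 = m-1 by omega, show m-1-1 = m-2 by omega, Sym2.eq_swap]
      exact wbE
    · -- wbE'
      show cw a b u v m n a s(v (n-1-(n-2)), v (n-1-(n-1))) = 2
      rw [show n-1-(n-2) = 1 by omega, show n-1-(n-1) = 0 by omega, Sym2.eq_swap]
      exact waF0
    · -- wU1'
      intro j hodd hj
      obtain ⟨t, ht⟩ := hodd
      show cw a b u v m n (v (n-1-j)) s(v (n-1-j), v (n-1-(j+1))) = 1
      rw [show n-1-(j+1) = n-2-j by omega, show n-1-j = (n-2-j)+1 by omega, Sym2.eq_swap]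
      exact wV1 (n-2-j) ⟨(n-2-j)/2, by omega⟩ (by omega)
    · -- wU2'
      intro j hodd hj
      obtain ⟨t, ht⟩ := hodd
      show cw a b u v m n (v (n-1-(j+1))) s(v (n-1-j), v (n-1-(j+1))) = 2
      rw [show n-1-(j+1) = n-2-j by omega, show n-1-j = (n-2-j)+1 by omega, Sym2.eq_swap]
      exact wV2 (n-2-j) ⟨(n-2-j)/2, by omega⟩ (by omega)
    · -- wV1'
      intro j heven hj
      obtain ⟨t, ht⟩ := heven
      show cw a b u v m n (u (m-1-(j+1))) s(u (m-1-j), u (m-1-(j+1))) = 1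
      rw [show m-1-(j+1) = m-2-j by omega, show m-1-j = (m-2-j)+1 by omega, Sym2.eq_swap]
      exact wU1 (m-2-j) ⟨(m-2-j-1)/2, by omega⟩ (by omega)
    · -- wV2'
      intro j heven hj
      obtain ⟨t, ht⟩ := heven
      show cw a b u v m n (u (m-1-j)) s(u (m-1-j), u (m-1-(j+1))) = 2
      rw [show m-1-(j+1) = m-2-j by omega, show m-1-j = (m-2-j)+1 by omega, Sym2.eq_swap]
      exact wU2 (m-2-j) ⟨(m-2-j-1)/2, by omega⟩ (by omega)
    · -- wEz'
      intro j heven hj x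
      obtain ⟨t, ht⟩ := heven
      show cw a b u v m n x s(v (n-1-j), v (n-1-(j+1))) = 0
      rw [show n-1-(j+1) = n-2-j by omega, show n-1-j = (n-2-j)+1 by omega, Sym2.eq_swap]
      exact wFz (n-2-j) ⟨(n-2-j-1)/2, by omega⟩ (by omega) x
    · -- wFz'
      intro j hodd hj x
      obtain ⟨t, ht⟩ := hodd
      show cw a b u v m n x s(u (m-1-j), u (m-1-(j+1))) = 0
      rw [show m-1-(j+1) = m-2-j by omega, show m-1-j = (m-2-j)+1 by omega, Sym2.eq_swap]
      exact wEz (m-2-j) ⟨(m-2-j)/2, by omega⟩ (by omega) x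
    · -- orientation
      exact horient0
    · -- star
      exact hstar
    · -- head of shared edge
      rw [Sym2.eq_swap]; exact hha
  · -- head s(a,b) = b : direct configuration
    exact masterLemma G head (cw a b u v m n) m n a b u v hm3 hn3 hm hn hab
      C1.u0 C1.ub C2.u0 C2.ub hEedge hFedge hgE C1.einj C2.einj C1.eg C2.eg
      (hEF 0 (by omega) 0 (by omega)) C1.uinj C2.uinj hIncU hIncV hIncA hIncB
      wag wbg waF0 wbE wU1 wU2 wV1 wV2 wEz wFz horient0 hstar hhb
end

section
/- Let G be a finite simple graph that is the union of two odd cycles whose intersection is exactly one vertex (they share exactly one vertex and no edges). Then G is not strongly EFX-orientable. -/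
open SimpleGraph
open scoped Classical

variable {V : Type*}

-- === my aux ===

noncomputable def fval [Fintype V] (w : V → Sym2 V → ℕ) (x : V) (X : Set (Sym2 V)) : NNReal :=
  ∑ e ∈ Finset.univ.filter (· ∈ X), (w x e : NNReal)

lemma fval_mono [Fintype V] (w : V → Sym2 V → ℕ) (x : V) : Monotone (fval w x) := by
  intro X Y h
  apply Finset.sum_le_sum_of_subset
  exact Finset.monotone_filter_right _ (fun e _ he => h he)

lemma fval_zero [Fintype V] {w : V → Sym2 V → ℕ} {x : V} {X : Set (Sym2 V)}
    (h : ∀ e ∈ X, w x e = 0) : fval w x X = 0 := by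
  apply Finset.sum_eq_zero
  intro e he
  rw [Finset.mem_filter] at he
  simp [h e he.2]

lemma fval_one [Fintype V] {w : V → Sym2 V → ℕ} {x : V} {X : Set (Sym2 V)} {e : Sym2 V}
    (he : e ∈ X) (hw : w x e = 1) : (1 : NNReal) ≤ fval w x X := by
  unfold fval
  calc (1 : NNReal) = ((w x e : ℕ) : NNReal) := by rw [hw]; norm_num
  _ ≤ _ := Finset.single_le_sum (f := fun e => ((w x e : NNReal)))
    (fun i _ => zero_le) (Finset.mem_filter.2 ⟨Finset.mem_univ e, he⟩)

lemma fval_graphical [Fintype V] {w : V → Sym2 V → ℕ} (G : SimpleGraph V)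
    (hsupp : ∀ x e, w x e ≠ 0 → e ∈ G.incidenceSet x) (x : V) (X : Set (Sym2 V)) :
    fval w x X = fval w x (X ∩ G.incidenceSet x) := by
  refine (Finset.sum_subset ?_ ?_).symm
  · intro e he
    simp only [Finset.mem_filter] at he ⊢
    exact ⟨he.1, he.2.1⟩
  · intro e he hne
    simp only [Finset.mem_filter] at he hne
    rw [Set.mem_inter_iff] at hne
    have : e ∉ G.incidenceSet x := by
      intro h; exact hne ⟨he.1, he.2, h⟩
    have : w x e = 0 := by
      by_contra h; exact this (hsupp x e h)
    simp [this]

lemma mem_bundleSet {G : SimpleGraph V} {head : Sym2 V → V} {x : V} {e : Sym2 V} :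
    e ∈ bundleSet G head x ↔ e ∈ G.edgeSet ∧ head e = x := Iff.rfl

/-- Key envy lemma: if `y`'s bundle has zero value and `x` holds two distinct edges,
one of which `y` values, the orientation is not EFX. -/
lemma keyL [Fintype V] {G : SimpleGraph V} {w : V → Sym2 V → ℕ} {head : Sym2 V → V}
    (hefx : IsEFXOrientation G (fval w) head)
    {y x : V} {e e' : Sym2 V}
    (hy : fval w y (bundleSet G head y) = 0)
    (he : e ∈ bundleSet G head x) (he' : e' ∈ bundleSet G head x)
    (hne : e ≠ e') (hwe : w y e = 1) : False := by
  have h1 := hefx.2 y x e' he'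
  have h2 : (1 : NNReal) ≤ fval w y (bundleSet G head x \ {e'}) :=
    fval_one ⟨he, hne⟩ hwe
  rw [hy] at h1
  exact absurd (le_trans h2 h1) (by norm_num)

lemma keyL' [Fintype V] {G : SimpleGraph V} {w : V → Sym2 V → ℕ} {head : Sym2 V → V}
    (hefx : IsEFXOrientation G (fval w) head)
    {y x : V} {e : Sym2 V}
    (hy : fval w y (bundleSet G head y) = 0)
    (he : e ∈ bundleSet G head x) (hwe : w y e = 1) :
    ∀ e' ∈ bundleSet G head x, e' = e := by
  intro e' he'
  by_contra hne
  exact keyL hefx hy he he' (fun h => hne h.symm) hwe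

/-- The chain step: a doubly-valued edge `e` with previous edge pointing at `y`
must point to `z`, and then the next edge must point away from `z`. -/
lemma chainStep [Fintype V] {G : SimpleGraph V} {w : V → Sym2 V → ℕ} {head : Sym2 V → V}
    (hefx : IsEFXOrientation G (fval w) head)
    {y z : V} {eprev e enext : Sym2 V}
    (heprev : eprev ∈ G.edgeSet) (he : e ∈ G.edgeSet) (henext : enext ∈ G.edgeSet)
    (hby : ∀ e' ∈ bundleSet G head y, e' = eprev ∨ e' = e)
    (hbz : ∀ e' ∈ bundleSet G head z, e' = e ∨ e' = enext)
    (hor : head e = y ∨ head e = z)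
    (hprev : head eprev = y)
    (wye : w y e = 1) (wze : w z e = 1) (wyp : w y eprev = 0) (wzn : w z enext = 0)
    (hne1 : e ≠ eprev) (hne2 : e ≠ enext) (hyz : y ≠ z) :
    head e = z ∧ head enext ≠ z := by
  have hez : head e = z := by
    rcases hor with h | h
    · exfalso
      have hzval : fval w z (bundleSet G head z) = 0 := by
        apply fval_zero
        intro e' he'
        rcases hbz e' he' with rfl | rfl
        · exact absurd (h ▸ he'.2) hyz
        · exact wzn
      exact keyL hefx hzval ⟨he, h⟩ ⟨heprev, hprev⟩ hne1 wze
    · exact h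
  refine ⟨hez, ?_⟩
  have hyval : fval w y (bundleSet G head y) = 0 := by
    apply fval_zero
    intro e' he'
    rcases hby e' he' with rfl | rfl
    · exact wyp
    · exact absurd (hez ▸ he'.2) hyz.symm
  intro hcon
  have := keyL' hefx hyval ⟨he, hez⟩ wye enext ⟨henext, hcon⟩
  exact hne2 this.symm


lemma cycleEdges_comp_add {k : ℕ} (c : ZMod k → V) (p : ZMod k) :
    cycleEdges (fun i => c (p + i)) = cycleEdges c := by
  ext e
  constructor
  · rintro ⟨i, rfl⟩
    refine ⟨p + i, ?_⟩
    show s(c (p + i), c (p + i + 1)) = s(c (p + i), c (p + (i + 1)))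
    rw [add_assoc]
  · rintro ⟨i, rfl⟩
    refine ⟨i - p, ?_⟩
    show s(c (p + (i - p)), c (p + (i - p + 1))) = s(c i, c (i + 1))
    have h1 : p + (i - p) = i := by ring
    have h2 : p + (i - p + 1) = i + 1 := by ring
    rw [h1, h2]

lemma range_comp_add {k : ℕ} (c : ZMod k → V) (p : ZMod k) :
    Set.range (fun i => c (p + i)) = Set.range c := by
  ext x
  constructor
  · rintro ⟨i, rfl⟩; exact ⟨p + i, rfl⟩
  · rintro ⟨i, rfl⟩
    refine ⟨i - p, ?_⟩
    show c (p + (i - p)) = c i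
    rw [show p + (i - p) = i from by ring]

/-- vertex of a cycle indexed by a natural number -/
def vtx {k : ℕ} (u : ZMod k → V) (i : ℕ) : V := u (i : ZMod k)

/-- edge of a cycle indexed by a natural number -/
def cyedge {k : ℕ} (u : ZMod k → V) (i : ℕ) : Sym2 V :=
  s(u (i : ZMod k), u ((i : ZMod k) + 1))

lemma cyedge_eq {k : ℕ} (u : ZMod k → V) (i : ℕ) :
    cyedge u i = s(vtx u i, vtx u (i + 1)) := by
  unfold cyedge vtx
  push_cast
  rfl

lemma cyedge_mem_cycleEdges {k : ℕ} (u : ZMod k → V) (i : ℕ) :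
    cyedge u i ∈ cycleEdges u := ⟨(i : ZMod k), rfl⟩

lemma natCast_ne_zero_zmod {k : ℕ} {i : ℕ} (h0 : 0 < i) (hk : i < k) :
    (i : ZMod k) ≠ 0 := by
  intro h
  rw [ZMod.natCast_eq_zero_iff] at h
  have := Nat.le_of_dvd h0 h
  omega

lemma natCast_inj_zmod {k : ℕ} {i j : ℕ} (hi : i < k) (hj : j < k)
    (h : (i : ZMod k) = j) : i = j := by
  have := congrArg ZMod.val h
  rwa [ZMod.val_cast_of_lt hi, ZMod.val_cast_of_lt hj] at this

lemma two_ne_zero_zmod {k : ℕ} (hk : 3 ≤ k) : (2 : ZMod k) ≠ 0 := by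
  have : ((2 : ℕ) : ZMod k) ≠ 0 := natCast_ne_zero_zmod (by omega) (by omega)
  simpa using this

lemma one_ne_zero_zmod {k : ℕ} (hk : 3 ≤ k) : (1 : ZMod k) ≠ 0 := by
  have : ((1 : ℕ) : ZMod k) ≠ 0 := natCast_ne_zero_zmod (by omega) (by omega)
  simpa using this

lemma cyedgeZ_inj {k : ℕ} (hk : 3 ≤ k) {u : ZMod k → V} (hu : Function.Injective u)
    {i j : ZMod k} (h : s(u i, u (i + 1)) = s(u j, u (j + 1))) : i = j := by
  rw [Sym2.eq_iff] at h
  rcases h with ⟨h1, _⟩ | ⟨h1, h2⟩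
  · exact hu h1
  · have e1 : i = j + 1 := hu h1
    have e2 : i + 1 = j := hu h2
    exfalso
    apply two_ne_zero_zmod hk
    have h3 : j + 1 + 1 = j := by rw [← e1, e2]
    have h4 : j + 2 = j + 0 := by
      rw [add_zero]
      calc j + 2 = j + 1 + 1 := by ring
      _ = j := h3
    exact add_left_cancel h4

lemma cyedge_inj {k : ℕ} (hk : 3 ≤ k) {u : ZMod k → V} (hu : Function.Injective u)
    {i j : ℕ} (hi : i < k) (hj : j < k) (h : cyedge u i = cyedge u j) : i = j :=
  natCast_inj_zmod hi hj (cyedgeZ_inj hk hu h)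

lemma vtx_inj {k : ℕ} {u : ZMod k → V} (hu : Function.Injective u)
    {i j : ℕ} (hi : i < k) (hj : j < k) (h : vtx u i = vtx u j) : i = j :=
  natCast_inj_zmod hi hj (hu h)

lemma vtx_mem_cyedge_left {k : ℕ} (u : ZMod k → V) (i : ℕ) : vtx u i ∈ cyedge u i := by
  rw [cyedge_eq]; exact Sym2.mem_mk_left _ _

lemma vtx_mem_cyedge_right {k : ℕ} (u : ZMod k → V) (i : ℕ) :
    vtx u (i + 1) ∈ cyedge u i := by
  rw [cyedge_eq]; exact Sym2.mem_mk_right _ _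

lemma mem_cyedge_iff {k : ℕ} (u : ZMod k → V) (i : ℕ) (x : V) :
    x ∈ cyedge u i ↔ x = vtx u i ∨ x = vtx u (i + 1) := by
  rw [cyedge_eq, Sym2.mem_iff]

-- ==== the weight function ====

open Classical in
noncomputable def wgt {m n : ℕ} (u : ZMod m → V) (v : ZMod n → V) (x : V) (e : Sym2 V) : ℕ :=
  if x ∈ e ∧ ((∃ j : ZMod m, Odd j.val ∧ e = s(u j, u (j + 1))) ∨
      (∃ j : ZMod n, Even j.val ∧ e = s(v j, v (j + 1)))) then 1 else 0

lemma wgt_supp {m n : ℕ} {u : ZMod m → V} {v : ZMod n → V} {x : V} {e : Sym2 V}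
    (h : wgt u v x e ≠ 0) :
    x ∈ e ∧ ((∃ j : ZMod m, Odd j.val ∧ e = s(u j, u (j + 1))) ∨
      (∃ j : ZMod n, Even j.val ∧ e = s(v j, v (j + 1)))) := by
  by_contra hc
  rw [wgt, if_neg hc] at h
  exact h rfl

lemma wgt_one_u {m n : ℕ} {u : ZMod m → V} (v : ZMod n → V) {x : V} {i : ℕ}
    (hi : i < m) (hodd : Odd i) (hx : x ∈ cyedge u i) : wgt u v x (cyedge u i) = 1 := by
  rw [wgt, if_pos]
  exact ⟨hx, Or.inl ⟨(i : ZMod m), by rw [ZMod.val_cast_of_lt hi]; exact hodd, rfl⟩⟩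

lemma wgt_one_v {m n : ℕ} (u : ZMod m → V) {v : ZMod n → V} {x : V} {i : ℕ}
    (hi : i < n) (heven : Even i) (hx : x ∈ cyedge v i) : wgt u v x (cyedge v i) = 1 := by
  rw [wgt, if_pos]
  exact ⟨hx, Or.inr ⟨(i : ZMod n), by rw [ZMod.val_cast_of_lt hi]; exact heven, rfl⟩⟩

lemma wgt_zero_u {m n : ℕ} (hm : 3 ≤ m) {u : ZMod m → V} {v : ZMod n → V}
    (hu : Function.Injective u) (hedge : cycleEdges u ∩ cycleEdges v = ∅)
    (x : V) {i : ℕ} (hi : i < m) (heven : Even i) : wgt u v x (cyedge u i) = 0 := by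
  rw [wgt, if_neg]
  rintro ⟨-, (⟨j, hodd, hEq⟩ | ⟨j, -, hEq⟩)⟩
  · have : (i : ZMod m) = j := cyedgeZ_inj hm hu hEq
    rw [← this, ZMod.val_cast_of_lt hi] at hodd
    exact (Nat.not_even_iff_odd.2 hodd) heven
  · exact Set.eq_empty_iff_forall_notMem.1 hedge (cyedge u i)
      ⟨cyedge_mem_cycleEdges u i, hEq ▸ ⟨j, rfl⟩⟩

lemma wgt_zero_v {m n : ℕ} (hn : 3 ≤ n) {u : ZMod m → V} {v : ZMod n → V}
    (hv : Function.Injective v) (hedge : cycleEdges u ∩ cycleEdges v = ∅)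
    (x : V) {i : ℕ} (hi : i < n) (hodd : Odd i) : wgt u v x (cyedge v i) = 0 := by
  rw [wgt, if_neg]
  rintro ⟨-, (⟨j, -, hEq⟩ | ⟨j, heven, hEq⟩)⟩
  · exact Set.eq_empty_iff_forall_notMem.1 hedge (cyedge v i)
      ⟨hEq ▸ ⟨j, rfl⟩, cyedge_mem_cycleEdges v i⟩
  · have : (i : ZMod n) = j := cyedgeZ_inj hn hv hEq
    rw [← this, ZMod.val_cast_of_lt hi] at heven
    exact (Nat.not_even_iff_odd.2 hodd) heven

lemma cyedge_not_diag {k : ℕ} (hk : 3 ≤ k) {u : ZMod k → V} (hu : Function.Injective u)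
    (i : ZMod k) : ¬ (s(u i, u (i + 1)) : Sym2 V).IsDiag := by
  rw [Sym2.mk_isDiag_iff]
  intro h
  have h1 : i + 0 = i + 1 := by rw [add_zero]; exact hu h
  exact one_ne_zero_zmod hk (add_left_cancel h1).symm

lemma main_aux [Fintype V] (G : SimpleGraph V) (m n : ℕ)
    (hm : Odd m) (hm3 : 3 ≤ m) (hn : Odd n) (hn3 : 3 ≤ n)
    (u : ZMod m → V) (v : ZMod n → V)
    (hu : Function.Injective u) (hv : Function.Injective v)
    (a : V) (hu0 : u 0 = a) (hv0 : v 0 = a)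
    (hvert : Set.range u ∩ Set.range v = {a})
    (hedge : cycleEdges u ∩ cycleEdges v = ∅)
    (hG : G = SimpleGraph.fromEdgeSet (cycleEdges u ∪ cycleEdges v)) :
    ¬ StronglyEFXOrientable G := by
  intro hS
  obtain ⟨K1, hK1⟩ := hm
  obtain ⟨K2, hK2⟩ := hn
  have hGedge : G.edgeSet = cycleEdges u ∪ cycleEdges v := by
    rw [hG, SimpleGraph.edgeSet_fromEdgeSet]
    apply sdiff_eq_left.2
    rw [Set.disjoint_left]
    rintro e (⟨i, rfl⟩ | ⟨i, rfl⟩) hd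
    · exact cyedge_not_diag hm3 hu i hd
    · exact cyedge_not_diag hn3 hv i hd
  have hg1G : ∀ i : ℕ, cyedge u i ∈ G.edgeSet := fun i => by
    rw [hGedge]; exact Or.inl (cyedge_mem_cycleEdges u i)
  have hg2G : ∀ i : ℕ, cyedge v i ∈ G.edgeSet := fun i => by
    rw [hGedge]; exact Or.inr (cyedge_mem_cycleEdges v i)
  have hvtx_u0 : vtx u 0 = a := by
    show u ((0 : ℕ) : ZMod m) = a; rw [Nat.cast_zero]; exact hu0
  have hvtx_v0 : vtx v 0 = a := by
    show v ((0 : ℕ) : ZMod n) = a; rw [Nat.cast_zero]; exact hv0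
  have hUm : vtx u m = a := by
    show u ((m : ℕ) : ZMod m) = a; rw [ZMod.natCast_self]; exact hu0
  have hVn : vtx v n = a := by
    show v ((n : ℕ) : ZMod n) = a; rw [ZMod.natCast_self]; exact hv0
  -- incidence structure
  have hincu : ∀ i : ℕ, 0 < i → i < m → ∀ e ∈ G.edgeSet, vtx u i ∈ e →
      e = cyedge u (i - 1) ∨ e = cyedge u i := by
    intro i h0 hi e he hme
    rw [hGedge] at he
    rcases he with ⟨jz, rfl⟩ | ⟨jz, rfl⟩
    · rw [Sym2.mem_iff] at hme
      rcases hme with h | h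
      · right
        show s(u jz, u (jz + 1)) = s(u ((i : ℕ) : ZMod m), u (((i : ℕ) : ZMod m) + 1))
        rw [show ((i : ℕ) : ZMod m) = jz from hu h]
      · left
        have hij : ((i : ℕ) : ZMod m) = jz + 1 := hu h
        show s(u jz, u (jz + 1)) = s(u ((i - 1 : ℕ) : ZMod m), u (((i - 1 : ℕ) : ZMod m) + 1))
        have hc : ((i - 1 : ℕ) : ZMod m) = jz := by
          rw [Nat.cast_sub h0, Nat.cast_one, hij]; ring
        rw [hc]
    · exfalso
      have hmem : vtx u i ∈ Set.range v := by
        rw [Sym2.mem_iff] at hme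
        rcases hme with h | h
        · exact ⟨jz, h.symm⟩
        · exact ⟨jz + 1, h.symm⟩
      have hia : vtx u i = a := by
        have h2 : vtx u i ∈ Set.range u ∩ Set.range v := ⟨⟨((i : ℕ) : ZMod m), rfl⟩, hmem⟩
        rw [hvert] at h2; exact h2
      have h3 : ((i : ℕ) : ZMod m) = 0 := hu (show u _ = u 0 by rw [hu0]; exact hia)
      exact natCast_ne_zero_zmod h0 hi h3
  have hincv : ∀ i : ℕ, 0 < i → i < n → ∀ e ∈ G.edgeSet, vtx v i ∈ e →
      e = cyedge v (i - 1) ∨ e = cyedge v i := by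
    intro i h0 hi e he hme
    rw [hGedge] at he
    rcases he with ⟨jz, rfl⟩ | ⟨jz, rfl⟩
    · exfalso
      have hmem : vtx v i ∈ Set.range u := by
        rw [Sym2.mem_iff] at hme
        rcases hme with h | h
        · exact ⟨jz, h.symm⟩
        · exact ⟨jz + 1, h.symm⟩
      have hia : vtx v i = a := by
        have h2 : vtx v i ∈ Set.range u ∩ Set.range v := ⟨hmem, ⟨((i : ℕ) : ZMod n), rfl⟩⟩
        rw [hvert] at h2; exact h2
      have h3 : ((i : ℕ) : ZMod n) = 0 := hv (show v _ = v 0 by rw [hv0]; exact hia)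
      exact natCast_ne_zero_zmod h0 hi h3
    · rw [Sym2.mem_iff] at hme
      rcases hme with h | h
      · right
        show s(v jz, v (jz + 1)) = s(v ((i : ℕ) : ZMod n), v (((i : ℕ) : ZMod n) + 1))
        rw [show ((i : ℕ) : ZMod n) = jz from hv h]
      · left
        have hij : ((i : ℕ) : ZMod n) = jz + 1 := hv h
        show s(v jz, v (jz + 1)) = s(v ((i - 1 : ℕ) : ZMod n), v (((i - 1 : ℕ) : ZMod n) + 1))
        have hc : ((i - 1 : ℕ) : ZMod n) = jz := by
          rw [Nat.cast_sub h0, Nat.cast_one, hij]; ring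
        rw [hc]
  have hinca : ∀ e ∈ G.edgeSet, a ∈ e →
      e = cyedge u (m - 1) ∨ e = cyedge u 0 ∨ e = cyedge v (n - 1) ∨ e = cyedge v 0 := by
    intro e he hme
    have hlastu : ((m - 1 : ℕ) : ZMod m) = -1 := by
      rw [Nat.cast_sub (by omega), ZMod.natCast_self, Nat.cast_one]; ring
    have hlastv : ((n - 1 : ℕ) : ZMod n) = -1 := by
      rw [Nat.cast_sub (by omega), ZMod.natCast_self, Nat.cast_one]; ring
    rw [hGedge] at he
    rcases he with ⟨jz, rfl⟩ | ⟨jz, rfl⟩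
    · rw [Sym2.mem_iff] at hme
      rcases hme with h | h
      · right; left
        have h2 : (0 : ZMod m) = jz := hu (by rw [hu0]; exact h)
        show s(u jz, u (jz + 1)) = s(u ((0 : ℕ) : ZMod m), u (((0 : ℕ) : ZMod m) + 1))
        rw [Nat.cast_zero, h2]
      · left
        have h1 : (0 : ZMod m) = jz + 1 := hu (by rw [hu0]; exact h)
        have h2 : jz = -1 := eq_neg_of_add_eq_zero_left h1.symm
        show s(u jz, u (jz + 1)) = s(u ((m - 1 : ℕ) : ZMod m), u (((m - 1 : ℕ) : ZMod m) + 1))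
        rw [hlastu, h2]
    · rw [Sym2.mem_iff] at hme
      rcases hme with h | h
      · right; right; right
        have h2 : (0 : ZMod n) = jz := hv (by rw [hv0]; exact h)
        show s(v jz, v (jz + 1)) = s(v ((0 : ℕ) : ZMod n), v (((0 : ℕ) : ZMod n) + 1))
        rw [Nat.cast_zero, h2]
      · right; right; left
        have h1 : (0 : ZMod n) = jz + 1 := hv (by rw [hv0]; exact h)
        have h2 : jz = -1 := eq_neg_of_add_eq_zero_left h1.symm
        show s(v jz, v (jz + 1)) = s(v ((n - 1 : ℕ) : ZMod n), v (((n - 1 : ℕ) : ZMod n) + 1))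
        rw [hlastv, h2]
  -- the valuation
  have hwsupp : ∀ x e, wgt u v x e ≠ 0 → e ∈ G.incidenceSet x := by
    intro x e h
    obtain ⟨hx, hP⟩ := wgt_supp h
    have hE : e ∈ G.edgeSet := by
      rw [hGedge]
      rcases hP with ⟨j, -, rfl⟩ | ⟨j, -, rfl⟩
      · exact Or.inl ⟨j, rfl⟩
      · exact Or.inr ⟨j, rfl⟩
    exact ⟨hE, hx⟩
  obtain ⟨head, hhead, hefx2⟩ :=
    hS (fval (wgt u v)) (fun x => fval_mono _ x) (fun x X => fval_graphical G hwsupp x X)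
  have hefx : IsEFXOrientation G (fval (wgt u v)) head := ⟨hhead, hefx2⟩
  have hbndu : ∀ i : ℕ, 0 < i → i < m → ∀ e' ∈ bundleSet G head (vtx u i),
      e' = cyedge u (i - 1) ∨ e' = cyedge u i := by
    intro i h0 hi e' he'
    obtain ⟨he1, he2⟩ := mem_bundleSet.1 he'
    have hh := hhead e' he1
    rw [he2] at hh
    exact hincu i h0 hi e' he1 hh
  have hbndv : ∀ i : ℕ, 0 < i → i < n → ∀ e' ∈ bundleSet G head (vtx v i),
      e' = cyedge v (i - 1) ∨ e' = cyedge v i := by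
    intro i h0 hi e' he'
    obtain ⟨he1, he2⟩ := mem_bundleSet.1 he'
    have hh := hhead e' he1
    rw [he2] at hh
    exact hincv i h0 hi e' he1 hh
  have hheadu : ∀ i : ℕ, head (cyedge u i) = vtx u i ∨ head (cyedge u i) = vtx u (i + 1) := by
    intro i
    have := hhead _ (hg1G i)
    rwa [mem_cyedge_iff] at this
  have hheadv : ∀ i : ℕ, head (cyedge v i) = vtx v i ∨ head (cyedge v i) = vtx v (i + 1) := by
    intro i
    have := hhead _ (hg2G i)
    rwa [mem_cyedge_iff] at this
  have hvneu : ∀ i j : ℕ, i < m → j < m → i ≠ j → vtx u i ≠ vtx u j :=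
    fun i j hi hj hij h => hij (vtx_inj hu hi hj h)
  have hvne : ∀ i j : ℕ, i < n → j < n → i ≠ j → vtx v i ≠ vtx v j :=
    fun i j hi hj hij h => hij (vtx_inj hv hi hj h)
  -- ===== cycle 1: a receives an edge of the first cycle =====
  have chain1 : ∀ k : ℕ, 2 * k + 1 ≤ m → head (cyedge u 0) = vtx u 1 →
      head (cyedge u (2 * k)) = vtx u (2 * k + 1) := by
    intro k
    induction k with
    | zero => intro _ h; simpa using h
    | succ k ih =>
      intro hk h0
      have prev : head (cyedge u (2 * k)) = vtx u (2 * k + 1) := ih (by omega) h0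
      have hby : ∀ e' ∈ bundleSet G head (vtx u (2 * k + 1)),
          e' = cyedge u (2 * k) ∨ e' = cyedge u (2 * k + 1) := by
        intro e' he'
        have := hbndu (2 * k + 1) (by omega) (by omega) e' he'
        rwa [show 2 * k + 1 - 1 = 2 * k from by omega] at this
      have hbz : ∀ e' ∈ bundleSet G head (vtx u (2 * k + 2)),
          e' = cyedge u (2 * k + 1) ∨ e' = cyedge u (2 * k + 2) := by
        intro e' he'
        have := hbndu (2 * k + 2) (by omega) (by omega) e' he'
        rwa [show 2 * k + 2 - 1 = 2 * k + 1 from by omega] at this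
      have hor : head (cyedge u (2 * k + 1)) = vtx u (2 * k + 1) ∨
          head (cyedge u (2 * k + 1)) = vtx u (2 * k + 2) := by
        have := hheadu (2 * k + 1)
        rwa [show 2 * k + 1 + 1 = 2 * k + 2 from by omega] at this
      obtain ⟨h1, h2⟩ := chainStep hefx (hg1G (2 * k)) (hg1G (2 * k + 1)) (hg1G (2 * k + 2))
        hby hbz hor prev
        (wgt_one_u v (by omega) ⟨k, by omega⟩ (vtx_mem_cyedge_left u (2 * k + 1)))
        (by
          have := wgt_one_u (u := u) v (i := 2 * k + 1) (by omega) ⟨k, by omega⟩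
            (vtx_mem_cyedge_right u (2 * k + 1))
          rwa [show 2 * k + 1 + 1 = 2 * k + 2 from by omega] at this)
        (wgt_zero_u hm3 hu hedge _ (by omega) ⟨k, by omega⟩)
        (wgt_zero_u hm3 hu hedge _ (by omega) ⟨k + 1, by omega⟩)
        (fun h => by have := cyedge_inj hm3 hu (by omega) (by omega) h; omega)
        (fun h => by have := cyedge_inj hm3 hu (by omega) (by omega) h; omega)
        (fun h => by have := vtx_inj hu (by omega) (by omega) h; omega)
      have hfin : head (cyedge u (2 * k + 2)) = vtx u (2 * k + 3) := by
        rcases hheadu (2 * k + 2) with h | h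
        · exact absurd h h2
        · rwa [show 2 * k + 2 + 1 = 2 * k + 3 from by omega] at h
      rw [show 2 * (k + 1) + 1 = 2 * k + 3 from by omega,
        show 2 * (k + 1) = 2 * k + 2 from by omega]
      exact hfin
  have hmainA : ∃ E, E ∈ bundleSet G head a ∧ E ∈ cycleEdges u := by
    rcases hheadu 0 with h0 | h0
    · exact ⟨cyedge u 0, mem_bundleSet.2 ⟨hg1G 0, h0.trans hvtx_u0⟩,
        cyedge_mem_cycleEdges u 0⟩
    · have hc := chain1 K1 (by omega) (by simpa using h0)
      refine ⟨cyedge u (2 * K1), mem_bundleSet.2 ⟨hg1G _, ?_⟩, cyedge_mem_cycleEdges u _⟩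
      rw [hc, show 2 * K1 + 1 = m from by omega]
      exact hUm
  obtain ⟨E, hEbnd, hEc1⟩ := hmainA
  have hEne : ∀ i : ℕ, E ≠ cyedge v i := by
    intro i h
    exact Set.eq_empty_iff_forall_notMem.1 hedge E ⟨hEc1, h ▸ cyedge_mem_cycleEdges v i⟩
  -- ===== cycle 2 =====
  have hVlast : vtx v (n - 1 + 1) = a := by
    rw [show n - 1 + 1 = n from by omega]; exact hVn
  have hstep1 : head (cyedge v 0) = vtx v 1 := by
    rcases hheadv 0 with h | h
    · exfalso
      have hbv1 : fval (wgt u v) (vtx v 1) (bundleSet G head (vtx v 1)) = 0 := by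
        apply fval_zero
        intro e' he'
        rcases (by simpa using hbndv 1 (by omega) (by omega) e' he' :
            e' = cyedge v 0 ∨ e' = cyedge v 1) with h' | h'
        · exfalso
          obtain ⟨he1, he2⟩ := mem_bundleSet.1 he'
          rw [h', h] at he2
          exact hvne 0 1 (by omega) (by omega) (by omega) he2
        · rw [h']
          exact wgt_zero_v hn3 hv hedge _ (by omega) ⟨0, by omega⟩
      exact keyL hefx hbv1 (mem_bundleSet.2 ⟨hg2G 0, h.trans hvtx_v0⟩) hEbnd
        (fun hh => hEne 0 hh.symm)
        (wgt_one_v u (by omega) ⟨0, rfl⟩ (vtx_mem_cyedge_right v 0))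
    · simpa using h
  have hstep1' : head (cyedge v (n - 1)) = vtx v (n - 1) := by
    rcases hheadv (n - 1) with h | h
    · exact h
    · exfalso
      have hbv : fval (wgt u v) (vtx v (n - 1)) (bundleSet G head (vtx v (n - 1))) = 0 := by
        apply fval_zero
        intro e' he'
        rcases hbndv (n - 1) (by omega) (by omega) e' he' with h' | h'
        · rw [h', show n - 1 - 1 = n - 2 from by omega]
          exact wgt_zero_v hn3 hv hedge _ (by omega) ⟨K2 - 1, by omega⟩
        · exfalso
          obtain ⟨he1, he2⟩ := mem_bundleSet.1 he'
          rw [h', h] at he2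
          have h3 : vtx v 0 = vtx v (n - 1) := by
            rw [hvtx_v0, ← hVlast]; exact he2
          exact hvne 0 (n - 1) (by omega) (by omega) (by omega) h3
      exact keyL hefx hbv (mem_bundleSet.2 ⟨hg2G _, h.trans hVlast⟩) hEbnd
        (fun hh => hEne _ hh.symm)
        (wgt_one_v u (by omega) ⟨K2, by omega⟩ (vtx_mem_cyedge_left v (n - 1)))
  have hstep2 : fval (wgt u v) a (bundleSet G head a) = 0 := by
    apply fval_zero
    intro e' he'
    obtain ⟨he1, he2⟩ := mem_bundleSet.1 he'
    have hmem : a ∈ e' := by have := hhead e' he1; rwa [he2] at this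
    rcases hinca e' he1 hmem with h | h | h | h
    · rw [h]; exact wgt_zero_u hm3 hu hedge _ (by omega) ⟨K1, by omega⟩
    · rw [h]; exact wgt_zero_u hm3 hu hedge _ (by omega) ⟨0, by omega⟩
    · exfalso
      rw [h, hstep1'] at he2
      exact hvne (n - 1) 0 (by omega) (by omega) (by omega) (he2.trans hvtx_v0.symm)
    · exfalso
      rw [h, hstep1] at he2
      exact hvne 1 0 (by omega) (by omega) (by omega) (he2.trans hvtx_v0.symm)
  have hball1 : ∀ e' ∈ bundleSet G head (vtx v 1), e' = cyedge v 0 :=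
    keyL' hefx hstep2 (mem_bundleSet.2 ⟨hg2G 0, hstep1⟩)
      (wgt_one_v u (by omega) ⟨0, by omega⟩ (hvtx_v0 ▸ vtx_mem_cyedge_left v 0))
  have hball2 : ∀ e' ∈ bundleSet G head (vtx v (n - 1)), e' = cyedge v (n - 1) :=
    keyL' hefx hstep2 (mem_bundleSet.2 ⟨hg2G _, hstep1'⟩)
      (wgt_one_v u (by omega) ⟨K2, by omega⟩ (hVlast ▸ vtx_mem_cyedge_right v (n - 1)))
  have hstep3a : head (cyedge v 1) = vtx v 2 := by
    rcases hheadv 1 with h | h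
    · exfalso
      have hb := hball1 (cyedge v 1) (mem_bundleSet.2 ⟨hg2G 1, h⟩)
      have := cyedge_inj hn3 hv (by omega) (by omega) hb
      omega
    · simpa using h
  have hstep3b : head (cyedge v (n - 2)) = vtx v (n - 2) := by
    rcases hheadv (n - 2) with h | h
    · exact h
    · exfalso
      have h' : head (cyedge v (n - 2)) = vtx v (n - 1) := by
        rwa [show n - 2 + 1 = n - 1 from by omega] at h
      have hb := hball2 (cyedge v (n - 2)) (mem_bundleSet.2 ⟨hg2G _, h'⟩)
      have := cyedge_inj hn3 hv (by omega) (by omega) hb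
      omega
  have chain2 : ∀ k : ℕ, 2 * k + 3 ≤ n → head (cyedge v (2 * k + 1)) = vtx v (2 * k + 2) := by
    intro k
    induction k with
    | zero => intro _; simpa using hstep3a
    | succ k ih =>
      intro hk
      have prev := ih (by omega)
      have hby : ∀ e' ∈ bundleSet G head (vtx v (2 * k + 2)),
          e' = cyedge v (2 * k + 1) ∨ e' = cyedge v (2 * k + 2) := by
        intro e' he'
        have := hbndv (2 * k + 2) (by omega) (by omega) e' he'
        rwa [show 2 * k + 2 - 1 = 2 * k + 1 from by omega] at this
      have hbz : ∀ e' ∈ bundleSet G head (vtx v (2 * k + 3)),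
          e' = cyedge v (2 * k + 2) ∨ e' = cyedge v (2 * k + 3) := by
        intro e' he'
        have := hbndv (2 * k + 3) (by omega) (by omega) e' he'
        rwa [show 2 * k + 3 - 1 = 2 * k + 2 from by omega] at this
      have hor : head (cyedge v (2 * k + 2)) = vtx v (2 * k + 2) ∨
          head (cyedge v (2 * k + 2)) = vtx v (2 * k + 3) := by
        have := hheadv (2 * k + 2)
        rwa [show 2 * k + 2 + 1 = 2 * k + 3 from by omega] at this
      obtain ⟨h1, h2⟩ := chainStep hefx (hg2G (2 * k + 1)) (hg2G (2 * k + 2)) (hg2G (2 * k + 3))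
        hby hbz hor prev
        (wgt_one_v u (by omega) ⟨k + 1, by omega⟩ (vtx_mem_cyedge_left v (2 * k + 2)))
        (by
          have := wgt_one_v (v := v) u (i := 2 * k + 2) (by omega) ⟨k + 1, by omega⟩
            (vtx_mem_cyedge_right v (2 * k + 2))
          rwa [show 2 * k + 2 + 1 = 2 * k + 3 from by omega] at this)
        (wgt_zero_v hn3 hv hedge _ (by omega) ⟨k, by omega⟩)
        (wgt_zero_v hn3 hv hedge _ (by omega) ⟨k + 1, by omega⟩)
        (fun h => by have := cyedge_inj hn3 hv (by omega) (by omega) h; omega)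
        (fun h => by have := cyedge_inj hn3 hv (by omega) (by omega) h; omega)
        (fun h => by have := vtx_inj hv (by omega) (by omega) h; omega)
      have hfin : head (cyedge v (2 * k + 3)) = vtx v (2 * k + 4) := by
        rcases hheadv (2 * k + 3) with h | h
        · exact absurd h h2
        · rwa [show 2 * k + 3 + 1 = 2 * k + 4 from by omega] at h
      rw [show 2 * (k + 1) + 1 = 2 * k + 3 from by omega,
        show 2 * (k + 1) + 2 = 2 * k + 4 from by omega]
      exact hfin
  have hfin := chain2 (K2 - 1) (by omega)
  rw [show 2 * (K2 - 1) + 1 = n - 2 from by omega,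
    show 2 * (K2 - 1) + 2 = n - 1 from by omega] at hfin
  exact hvne (n - 2) (n - 1) (by omega) (by omega) (by omega) (hstep3b.symm.trans hfin)

/-- The union of two odd cycles whose intersection is exactly one vertex
(they share exactly one vertex and no edges) is not strongly EFX-orientable. -/
theorem not_stronglyEFXOrientable_oddCycles_sharing_vertex [Fintype V] (G : SimpleGraph V)
    (m n : ℕ) (hm : Odd m) (hm3 : 3 ≤ m) (hn : Odd n) (hn3 : 3 ≤ n)
    (c₁ : ZMod m → V) (c₂ : ZMod n → V)
    (hc₁ : Function.Injective c₁) (hc₂ : Function.Injective c₂)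
    (a : V) (hvert : Set.range c₁ ∩ Set.range c₂ = {a})
    (hedge : cycleEdges c₁ ∩ cycleEdges c₂ = ∅)
    (hG : G = SimpleGraph.fromEdgeSet (cycleEdges c₁ ∪ cycleEdges c₂)) :
    ¬ StronglyEFXOrientable G := by
  have ha : a ∈ Set.range c₁ ∩ Set.range c₂ := by rw [hvert]; rfl
  obtain ⟨p, hp⟩ := ha.1
  obtain ⟨q, hq⟩ := ha.2
  refine main_aux G m n hm hm3 hn hn3 (fun i => c₁ (p + i)) (fun i => c₂ (q + i))
    (fun i j h => add_left_cancel (hc₁ h)) (fun i j h => add_left_cancel (hc₂ h))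
    a (by show c₁ (p + 0) = a; rw [add_zero]; exact hp)
    (by show c₂ (q + 0) = a; rw [add_zero]; exact hq) ?_ ?_ ?_
  · rw [range_comp_add, range_comp_add]; exact hvert
  · rw [cycleEdges_comp_add, cycleEdges_comp_add]; exact hedge
  · rw [cycleEdges_comp_add, cycleEdges_comp_add]; exact hG
end

section
/- The complete graph K_4 violates the matching condition: there exists a matching M of size 2 in K_4, while the subgraph induced by the vertices covered by M (which is all of K_4) contains no independent set of size 2. Consequently, K_4 is not 0-1 strongly EFX-orientable. -/
open SimpleGraph
open scoped Classical

variable {V : Type*}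

/-- A matching: a set of edges of `G` that are pairwise vertex-disjoint. -/
def IsMatchingSet (G : SimpleGraph V) (M : Finset (Sym2 V)) : Prop :=
  (∀ e ∈ M, e ∈ G.edgeSet) ∧
  ∀ e ∈ M, ∀ f ∈ M, e ≠ f → ∀ v : V, ¬(v ∈ e ∧ v ∈ f)


def K4w : Fin 4 → Sym2 (Fin 4) → ℕ := fun a e =>
  if (e = s((0:Fin 4),1) ∨ e = s((2:Fin 4),3)) ∧ a ∈ e then 1 else 0

lemma K4aux (u u' v v' : Fin 4)
    (e1 : s(u,u') = s((0:Fin 4),1)) (e2 : s(v,v') = s((2:Fin 4),3))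
    (huv : u ≠ v) (huu' : u ≠ u') (hvv' : v ≠ v')
    (hu'23 : u' ∉ s((2:Fin 4),3)) (hv'01 : v' ∉ s((0:Fin 4),1))
    (hv01 : v ∉ s((0:Fin 4),1)) (hu23 : u ∉ s((2:Fin 4),3))
    (head : Sym2 (Fin 4) → Fin 4)
    (hEFX : IsEFX01Orientation (completeGraph (Fin 4)) K4w head)
    (hu : head s((0:Fin 4),1) = u) (hv : head s((2:Fin 4),3) = v) : False := by
  classical
  set G := completeGraph (Fin 4) with hG
  have hu'01 : u' ∈ s((0:Fin 4),1) := e1 ▸ Sym2.mem_mk_right u u'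
  have hv'23 : v' ∈ s((2:Fin 4),3) := e2 ▸ Sym2.mem_mk_right v v'
  have he01 : s((0:Fin 4),1) ∈ G.edgeSet := by
    rw [SimpleGraph.mem_edgeSet]; exact (by decide : (0:Fin 4) ≠ 1)
  have he23 : s((2:Fin 4),3) ∈ G.edgeSet := by
    rw [SimpleGraph.mem_edgeSet]; exact (by decide : (2:Fin 4) ≠ 3)
  have mem_bundle : ∀ (x : Fin 4) (e : Sym2 (Fin 4)),
      e ∈ bundle G head x ↔ e ∈ G.edgeSet ∧ head e = x := by
    intro x e
    simp [bundle]
  -- step 1 : agent u' values its own bundle at 0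
  have step1 : ∑ e ∈ bundle G head u', K4w u' e = 0 := by
    apply Finset.sum_eq_zero
    intro e he
    rw [mem_bundle] at he
    rw [K4w, if_neg]
    rintro ⟨(rfl | rfl), hm⟩
    · exact huu' (hu.symm.trans he.2)
    · exact hu'23 hm
  -- step 2
  have step2 : s((0:Fin 4),1) ∈ bundle G head u := (mem_bundle _ _).mpr ⟨he01, hu⟩
  have w01 : K4w u' s((0:Fin 4),1) = 1 := by
    rw [K4w, if_pos ⟨Or.inl rfl, hu'01⟩]
  -- step 3 : bundle of u is exactly {s(0,1)}
  have step3 : ∀ g ∈ bundle G head u, g = s((0:Fin 4),1) := by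
    intro g hg
    by_contra hne
    have hEF := hEFX.2 u' u g hg
    rw [step1, Nat.le_zero, Finset.sum_eq_zero_iff] at hEF
    have h0 : K4w u' s((0:Fin 4),1) = 0 := by
      apply hEF
      have hm : s((0:Fin 4),1) ∈ (bundle G head u).erase g :=
        Finset.mem_erase.mpr ⟨fun h => hne h.symm, step2⟩
      convert hm using 2
    rw [w01] at h0
    exact one_ne_zero h0
  -- step 4 : head s(u,v) = v
  have heuv : s(u,v) ∈ G.edgeSet := by rw [SimpleGraph.mem_edgeSet]; exact huv
  have hmemuv := hEFX.1 s(u,v) heuv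
  rcases Sym2.mem_iff.mp hmemuv with h | h
  · have : s(u,v) = s((0:Fin 4),1) := step3 _ ((mem_bundle _ _).mpr ⟨heuv, h⟩)
    exact hv01 (this ▸ Sym2.mem_mk_right u v)
  -- step 5/6/7
  have step5 : s(u,v) ∈ bundle G head v := (mem_bundle _ _).mpr ⟨heuv, h⟩
  have step6 : ∑ e ∈ bundle G head v', K4w v' e = 0 := by
    apply Finset.sum_eq_zero
    intro e he
    rw [mem_bundle] at he
    rw [K4w, if_neg]
    rintro ⟨(rfl | rfl), hm⟩
    · exact hv'01 hm
    · exact hvv' (hv.symm.trans he.2)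
  have hne23 : s((2:Fin 4),3) ≠ s(u,v) := by
    intro hEq
    exact hu23 (hEq ▸ Sym2.mem_mk_left u v)
  have w23 : K4w v' s((2:Fin 4),3) = 1 := by
    rw [K4w, if_pos ⟨Or.inr rfl, hv'23⟩]
  have hEF := hEFX.2 v' v s(u,v) step5
  rw [step6, Nat.le_zero, Finset.sum_eq_zero_iff] at hEF
  have h0 : K4w v' s((2:Fin 4),3) = 0 := by
    apply hEF
    have hm : s((2:Fin 4),3) ∈ (bundle G head v).erase s(u,v) :=
      Finset.mem_erase.mpr ⟨hne23, (mem_bundle _ _).mpr ⟨he23, hv⟩⟩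
    convert hm using 2
  rw [w23] at h0
  exact one_ne_zero h0

/-- The complete graph `K₄` violates the matching condition: it has a
matching `M` of size 2, while the subgraph induced by the vertices covered by `M` contains
no independent set of size 2. Consequently, `K₄` is not 0-1 strongly EFX-orientable. -/
theorem K4_violates_matching_condition :
    (∃ M : Finset (Sym2 (Fin 4)), IsMatchingSet (completeGraph (Fin 4)) M ∧ M.card = 2 ∧
      ¬ ∃ I : Finset (Fin 4), I.card = 2 ∧ (∀ x ∈ I, ∃ e ∈ M, x ∈ e) ∧
        ∀ a ∈ I, ∀ b ∈ I, ¬ (completeGraph (Fin 4)).Adj a b) ∧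
    ¬ ZeroOneStronglyEFXOrientable (completeGraph (Fin 4)) := by
  constructor
  · refine ⟨{s((0:Fin 4),1), s((2:Fin 4),3)}, ⟨?_, ?_⟩, ?_, ?_⟩
    · intro e he
      rw [Finset.mem_insert, Finset.mem_singleton] at he
      rcases he with rfl | rfl <;>
        (rw [SimpleGraph.mem_edgeSet]; simp only [completeGraph, SimpleGraph.top_adj]; decide)
    · intro e he f hf hne
      rw [Finset.mem_insert, Finset.mem_singleton] at he hf
      rcases he with rfl | rfl <;> rcases hf with rfl | rfl <;>
        first
          | exact absurd rfl hne
          | decide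
    · decide
    · rintro ⟨I, hcard, -, hindep⟩
      obtain ⟨a, ha, b, hb, hab⟩ := Finset.one_lt_card.mp (by omega : 1 < I.card)
      exact hindep a ha b hb hab
  · intro hSOE
    obtain ⟨head, hEFX⟩ := hSOE K4w
      (fun a e => by rw [K4w]; split <;> omega)
      (fun a e ha => by rw [K4w, if_neg]; rintro ⟨-, h⟩; exact ha h)
    have h01 : head s((0:Fin 4),1) ∈ s((0:Fin 4),1) :=
      hEFX.1 _ (by rw [SimpleGraph.mem_edgeSet]; simp only [completeGraph, SimpleGraph.top_adj]; decide)
    have h23 : head s((2:Fin 4),3) ∈ s((2:Fin 4),3) :=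
      hEFX.1 _ (by rw [SimpleGraph.mem_edgeSet]; simp only [completeGraph, SimpleGraph.top_adj]; decide)
    rcases Sym2.mem_iff.mp h01 with h1 | h1 <;> rcases Sym2.mem_iff.mp h23 with h2 | h2
    · exact K4aux 0 1 2 3 rfl rfl (by decide) (by decide) (by decide) (by decide)
        (by decide) (by decide) (by decide) head hEFX h1 h2
    · exact K4aux 0 1 3 2 rfl Sym2.eq_swap (by decide) (by decide) (by decide) (by decide)
        (by decide) (by decide) (by decide) head hEFX h1 h2
    · exact K4aux 1 0 2 3 Sym2.eq_swap rfl (by decide) (by decide) (by decide) (by decide)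
        (by decide) (by decide) (by decide) head hEFX h1 h2
    · exact K4aux 1 0 3 2 Sym2.eq_swap Sym2.eq_swap (by decide) (by decide) (by decide)
        (by decide) (by decide) (by decide) (by decide) head hEFX h1 h2
end
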